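/- arXiv:1807.11029 — 12 statements merged into one kernel-verified Lean document; each statement's English description precedes it below -/
import Mathlib

section
/- Let n ≥ 1, let f : ℝⁿ → ℝⁿ, and suppose there is a continuous matrix-valued function A : ℝⁿ → (n×n real matrices) such that f(x) = A(x)·x for all x ∈ ℝⁿ. Suppose moreover there exists a single (state-independent) invertible complex n×n matrix V such that for every x ∈ ℝⁿ the matrix V⁻¹·A(x)·V (with A(x) viewed as a complex matrix) is diagonal and every diagonal entry of it has strictly negative real part. Then every solution x : [0,∞) → ℝⁿ of the differential equation x'(t) = f(x(t)) converges to the origin as t → ∞. -/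
/-- If a nonlinear system `x' = f(x)` has a pseudo-linear form
`f(x) = A(x)·x` with a continuous matrix-valued `A`, and a single
state-independent invertible complex matrix `V` diagonalizes `A(x)` for every
`x`, with all diagonal entries having strictly negative real part, then every
solution on `[0,∞)` converges to the origin. -/
theorem stmt_0 (n : ℕ) (hn : 1 ≤ n)
    (f : (Fin n → ℝ) → (Fin n → ℝ))
    (A : (Fin n → ℝ) → Matrix (Fin n) (Fin n) ℝ)
    (hAcont : Continuous A)
    (hPL : ∀ x : Fin n → ℝ, f x = (A x).mulVec x)
    (V : Matrix (Fin n) (Fin n) ℂ) (hV : IsUnit V)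
    (hdiag : ∀ x : Fin n → ℝ, (V⁻¹ * (A x).map Complex.ofReal * V).IsDiag)
    (hneg : ∀ x : Fin n → ℝ, ∀ i : Fin n,
      ((V⁻¹ * (A x).map Complex.ofReal * V) i i).re < 0)
    (x : ℝ → (Fin n → ℝ))
    (hx : ∀ t : ℝ, 0 ≤ t → HasDerivAt x (f (x t)) t) :
    Filter.Tendsto x Filter.atTop (nhds 0) := by
  classical
  set Ac : (Fin n → ℝ) → Matrix (Fin n) (Fin n) ℂ := fun p => (A p).map Complex.ofReal with hAcdef
  set D : (Fin n → ℝ) → Matrix (Fin n) (Fin n) ℂ := fun p => V⁻¹ * Ac p * V with hDdef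
  have hVdet : IsUnit V.det := (Matrix.isUnit_iff_isUnit_det V).mp hV
  have hVV : V * V⁻¹ = 1 := Matrix.mul_nonsing_inv V hVdet
  set xc : ℝ → Fin n → ℂ := fun t j => (x t j : ℂ) with hxcdef
  set y : ℝ → Fin n → ℂ := fun t => (V⁻¹).mulVec (xc t) with hydef
  have hxcy : ∀ t, xc t = V.mulVec (y t) := by
    intro t
    rw [hydef]
    rw [Matrix.mulVec_mulVec, hVV, Matrix.one_mulVec]
  -- derivative of the complexified trajectory
  have hxc' : ∀ t, 0 ≤ t → HasDerivAt xc ((Ac (x t)).mulVec (xc t)) t := by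
    intro t ht
    rw [hasDerivAt_pi]
    intro i
    have h1 : HasDerivAt (fun s => x s i) (f (x t) i) t := (hasDerivAt_pi.mp (hx t ht)) i
    have h2 := h1.ofReal_comp
    refine h2.congr_deriv ?_
    rw [hPL]
    simp [hAcdef, hxcdef, Matrix.mulVec, dotProduct, Matrix.map_apply]
  -- derivative of the diagonalized trajectory, coordinatewise
  have hy' : ∀ t, 0 ≤ t → ∀ i, HasDerivAt (fun s => y s i) (D (x t) i i * y t i) t := by
    intro t ht i
    have h1 : HasDerivAt (fun s => ∑ j, V⁻¹ i j * xc s j)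
        (∑ j, V⁻¹ i j * ((Ac (x t)).mulVec (xc t)) j) t :=
      HasDerivAt.fun_sum (fun j _ => ((hasDerivAt_pi.mp (hxc' t ht)) j).const_mul _)
    have h2 : HasDerivAt (fun s => y s i) (((V⁻¹).mulVec ((Ac (x t)).mulVec (xc t))) i) t := by
      simpa [hydef, Matrix.mulVec, dotProduct] using h1
    have e1 : (V⁻¹).mulVec ((Ac (x t)).mulVec (xc t)) = (D (x t)).mulVec (y t) := by
      rw [hxcy t, Matrix.mulVec_mulVec, Matrix.mulVec_mulVec, hDdef]
    have e2 : ((D (x t)).mulVec (y t)) i = D (x t) i i * y t i := by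
      simp only [Matrix.mulVec, dotProduct]
      refine Finset.sum_eq_single i (fun j _ hj => ?_) (by simp)
      exact mul_eq_zero_of_left (hdiag (x t) (Ne.symm hj)) _
    rw [e1, e2] at h2
    exact h2
  -- squared norms of coordinates
  set g : Fin n → ℝ → ℝ := fun i t => Complex.normSq (y t i) with hgdef
  have hg' : ∀ t, 0 ≤ t → ∀ i, HasDerivAt (g i) (2 * (D (x t) i i).re * g i t) t := by
    intro t ht i
    have hu := hy' t ht i
    have hconj : HasDerivAt (fun s => star (y s i)) (star (D (x t) i i * y t i)) t := hu.star
    have hmul := hu.mul hconj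
    have hre := Complex.reCLM.hasFDerivAt.comp_hasDerivAt t hmul
    have e3 : (⇑Complex.reCLM ∘ ((fun s => y s i) * fun s => star (y s i))) = g i := by
      funext s
      simp [hgdef, Function.comp, Pi.mul_apply, Complex.star_def, Complex.mul_conj]
    have e4 : Complex.reCLM (D (x t) i i * y t i * star (y t i) +
        y t i * star (D (x t) i i * y t i)) = 2 * (D (x t) i i).re * g i t := by
      simp [hgdef, Complex.star_def, Complex.normSq_apply, Complex.mul_re, Complex.mul_im,
        Complex.conj_re, Complex.conj_im]
      ring
    rw [e4, e3] at hre
    exact hre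
  have hDneg : ∀ (p : Fin n → ℝ) (i : Fin n), (D p i i).re < 0 := hneg
  have hgnonneg : ∀ i t, 0 ≤ g i t := fun i t => Complex.normSq_nonneg _
  -- Stage A: each g i is nonincreasing on [0, ∞)
  have hgmono : ∀ i, AntitoneOn (g i) (Set.Ici 0) := by
    intro i
    apply antitoneOn_of_deriv_nonpos (convex_Ici 0)
    · intro t ht
      exact (hg' t ht i).continuousAt.continuousWithinAt
    · intro t ht
      rw [interior_Ici] at ht
      exact (hg' t ht.le i).differentiableAt.differentiableWithinAt
    · intro t ht
      rw [interior_Ici] at ht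
      rw [(hg' t ht.le i).deriv]
      nlinarith [hDneg (x t) i, hgnonneg i t]
  have hynorm : ∀ t, 0 ≤ t → ∀ i, ‖y t i‖ ≤ ‖y 0 i‖ := by
    intro t ht i
    have := hgmono i (Set.self_mem_Ici) (Set.mem_Ici.mpr ht) ht
    have h1 : ‖y t i‖ = Real.sqrt (g i t) := by
      rw [hgdef, Complex.norm_def]
    have h2 : ‖y 0 i‖ = Real.sqrt (g i 0) := by
      rw [hgdef, Complex.norm_def]
    rw [h1, h2]
    exact Real.sqrt_le_sqrt this
  -- the trajectory is bounded: it stays in a closed ball of radius R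
  set L : (Fin n → ℂ) →L[ℂ] (Fin n → ℂ) :=
    LinearMap.toContinuousLinearMap (Matrix.mulVecLin V) with hLdef
  set R : ℝ := ‖L‖ * ‖y 0‖ with hRdef
  have hR0 : 0 ≤ R := mul_nonneg (norm_nonneg _) (norm_nonneg _)
  have hxcL : ∀ t, xc t = L (y t) := by
    intro t
    rw [hxcy t, hLdef]
    rfl
  have hball : ∀ t, 0 ≤ t → x t ∈ Metric.closedBall (0 : Fin n → ℝ) R := by
    intro t ht
    rw [Metric.mem_closedBall, dist_zero_right]
    have hyt : ‖y t‖ ≤ ‖y 0‖ := by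
      apply pi_norm_le_iff_of_nonneg (norm_nonneg _) |>.mpr
      intro i
      exact (hynorm t ht i).trans (norm_le_pi_norm (y 0) i)
    have hxct : ‖xc t‖ ≤ R := by
      rw [hxcL t, hRdef]
      calc ‖L (y t)‖ ≤ ‖L‖ * ‖y t‖ := L.le_opNorm _
        _ ≤ ‖L‖ * ‖y 0‖ := by
            exact mul_le_mul_of_nonneg_left hyt (norm_nonneg _)
    apply pi_norm_le_iff_of_nonneg (hR0.trans' le_rfl) |>.mpr
    intro i
    calc ‖x t i‖ = |(xc t i).re| := by simp [hxcdef]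
      _ ≤ ‖xc t i‖ := Complex.abs_re_le_norm _
      _ ≤ ‖xc t‖ := norm_le_pi_norm _ i
      _ ≤ R := hxct
  -- each coordinate of y tends to zero
  have hycoord : ∀ i, Filter.Tendsto (fun t => y t i) Filter.atTop (nhds 0) := by
    intro i
    -- find a uniform negative bound on the closed ball
    have hDcont : Continuous (fun p => (D p i i).re) := by
      have h1 : Continuous D :=
        (continuous_const.matrix_mul (hAcont.matrix_map Complex.continuous_ofReal)).matrix_mul
          continuous_const
      exact Complex.continuous_re.comp (h1.matrix_elem i i)
    obtain ⟨p₀, _, hp₀⟩ := (isCompact_closedBall (0 : Fin n → ℝ) R).exists_isMaxOn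
      ⟨0, Metric.mem_closedBall_self hR0⟩ hDcont.continuousOn
    set δ : ℝ := -(D p₀ i i).re with hδdef
    have hδpos : 0 < δ := by
      have := hDneg p₀ i
      simp only [hδdef]
      linarith
    have hdbound : ∀ t, 0 ≤ t → (D (x t) i i).re ≤ -δ := by
      intro t ht
      have := hp₀ (hball t ht)
      simp only [Set.mem_setOf_eq] at this
      simp only [hδdef]
      linarith
    -- Stage B: exponential decay via the auxiliary function h
    set h : ℝ → ℝ := fun t => g i t * Real.exp (2 * δ * t) with hhdef
    have hh' : ∀ t, 0 ≤ t → HasDerivAt h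
        (2 * (D (x t) i i).re * g i t * Real.exp (2 * δ * t)
          + g i t * (Real.exp (2 * δ * t) * (2 * δ))) t := by
      intro t ht
      have he : HasDerivAt (fun s => Real.exp (2 * δ * s)) (Real.exp (2 * δ * t) * (2 * δ)) t := by
        have : HasDerivAt (fun s => 2 * δ * s) (2 * δ) t := by
          simpa using (hasDerivAt_id t).const_mul (2 * δ)
        exact this.exp
      exact (hg' t ht i).mul he
    have hhmono : AntitoneOn h (Set.Ici 0) := by
      apply antitoneOn_of_deriv_nonpos (convex_Ici 0)
      · intro t ht
        exact (hh' t ht).continuousAt.continuousWithinAt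
      · intro t ht
        rw [interior_Ici] at ht
        exact (hh' t ht.le).differentiableAt.differentiableWithinAt
      · intro t ht
        rw [interior_Ici] at ht
        rw [(hh' t ht.le).deriv]
        have h1 := hdbound t ht.le
        have h2 := hgnonneg i t
        have h3 := Real.exp_pos (2 * δ * t)
        have key : (2 * (D (x t) i i).re + 2 * δ) * (g i t * Real.exp (2 * δ * t)) ≤ 0 :=
          mul_nonpos_of_nonpos_of_nonneg (by linarith) (mul_nonneg h2 h3.le)
        nlinarith [key]
    have hgbound : ∀ t, 0 ≤ t → g i t ≤ g i 0 * Real.exp (-(2 * δ) * t) := by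
      intro t ht
      have := hhmono Set.self_mem_Ici (Set.mem_Ici.mpr ht) ht
      simp only [hhdef, mul_zero, Real.exp_zero, mul_one] at this
      rw [neg_mul, Real.exp_neg, ← div_eq_mul_inv, le_div_iff₀ (Real.exp_pos _)]
      exact this
    -- conclude g i → 0
    have hgtend : Filter.Tendsto (g i) Filter.atTop (nhds 0) := by
      apply squeeze_zero' (Filter.Eventually.of_forall (hgnonneg i))
        (Filter.eventually_atTop.mpr ⟨0, fun t ht => hgbound t ht⟩)
      have h1 : Filter.Tendsto (fun t : ℝ => 2 * δ * t) Filter.atTop Filter.atTop :=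
        Filter.Tendsto.const_mul_atTop (by linarith) Filter.tendsto_id
      have h2 : Filter.Tendsto (fun t : ℝ => Real.exp (-(2 * δ) * t)) Filter.atTop (nhds 0) := by
        have h3 := Real.tendsto_exp_neg_atTop_nhds_zero.comp h1
        exact h3.congr fun t => by simp [Function.comp_def, neg_mul]
      simpa using h2.const_mul (g i 0)
    -- from normSq → 0 to y i → 0
    rw [tendsto_zero_iff_norm_tendsto_zero]
    have hsq : Filter.Tendsto (fun t => Real.sqrt (g i t)) Filter.atTop (nhds 0) := by
      have := (Real.continuous_sqrt.tendsto 0).comp hgtend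
      simpa [Function.comp_def] using this
    have heq : (fun t => ‖y t i‖) = fun t => Real.sqrt (g i t) := by
      funext t
      rw [hgdef, Complex.norm_def]
    rw [heq]
    exact hsq
  -- conclude: y → 0, then xc → 0, then x → 0
  have hytend : Filter.Tendsto y Filter.atTop (nhds 0) := by
    rw [tendsto_pi_nhds]
    intro i
    simpa using hycoord i
  have hxctend : Filter.Tendsto xc Filter.atTop (nhds 0) := by
    have h0 := (L.continuous.tendsto 0).comp hytend
    rw [map_zero] at h0
    exact h0.congr fun t => (hxcL t).symm
  rw [tendsto_pi_nhds]
  intro i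
  have h0 := (Complex.continuous_re.tendsto 0).comp (tendsto_pi_nhds.mp hxctend i)
  rw [Complex.zero_re] at h0
  have h1 := h0.congr fun t => rfl
  simpa using h0.congr (fun t => show (xc t i).re = x t i by simp [hxcdef])
end

section
/- Let a, b, c, h, r > 0 and let x₃₀ > h. Set d = min{a, b}. Then there exists ρ₁ > max{r/√d, 0} such that for all (x₁, x₂, x₃) ∈ ℝ³ with h ≤ x₃ ≤ x₃₀ and x₁² + x₂² ≥ ρ₁², one has (r² − ax₁² − bx₂² − cx₃²)·x₃ + (x₃² − h²)·√(x₁² + x₂²) < 0. (Equivalently, at such points the vector field satisfies ẋ₃ < −ρ̇, i.e., the ratio ẋ₃/ρ̇ is below −1 wherever ρ̇ > 0.) -/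
lemma stmt_6_aux (a b c h r d K ρ₁ : ℝ)
    (hd : 0 < d) (hda : d ≤ a) (hdb : d ≤ b) (hc : 0 ≤ c)
    (hh : 0 < h) (hK : 0 < K) (hρ0 : 0 < ρ₁) (h1ρ : 1 ≤ ρ₁)
    (hr2 : r ^ 2 < d * ρ₁ ^ 2) (hq : r ^ 2 * h + K < d * h * ρ₁)
    (x₁ x₂ x₃ : ℝ) (hx3l : h ≤ x₃) (hx3u : x₃ ^ 2 - h ^ 2 ≤ K)
    (hS : ρ₁ ^ 2 ≤ x₁ ^ 2 + x₂ ^ 2) :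
    (r ^ 2 - a * x₁ ^ 2 - b * x₂ ^ 2 - c * x₃ ^ 2) * x₃ +
      (x₃ ^ 2 - h ^ 2) * Real.sqrt (x₁ ^ 2 + x₂ ^ 2) < 0 := by
  set t := Real.sqrt (x₁ ^ 2 + x₂ ^ 2) with htdef
  have hSnn : (0:ℝ) ≤ x₁ ^ 2 + x₂ ^ 2 := by positivity
  have ht2 : t ^ 2 = x₁ ^ 2 + x₂ ^ 2 := Real.sq_sqrt hSnn
  have htρ : ρ₁ ≤ t := by
    have := Real.sqrt_le_sqrt hS
    rwa [Real.sqrt_sq hρ0.le] at this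
  have ht0 : 0 ≤ t := Real.sqrt_nonneg _
  have hx30 : 0 < x₃ := lt_of_lt_of_le hh hx3l
  have e1 : r ^ 2 - a * x₁ ^ 2 - b * x₂ ^ 2 - c * x₃ ^ 2 ≤ r ^ 2 - d * t ^ 2 := by
    rw [ht2]
    nlinarith [sq_nonneg x₁, sq_nonneg x₂, sq_nonneg x₃]
  have e2 : r ^ 2 - d * t ^ 2 < 0 := by
    have h4 : ρ₁ * ρ₁ ≤ t * t := mul_self_le_mul_self hρ0.le htρ
    nlinarith
  have e3 : (r ^ 2 - a * x₁ ^ 2 - b * x₂ ^ 2 - c * x₃ ^ 2) * x₃ ≤ (r ^ 2 - d * t ^ 2) * h :=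
    calc (r ^ 2 - a * x₁ ^ 2 - b * x₂ ^ 2 - c * x₃ ^ 2) * x₃
        ≤ (r ^ 2 - d * t ^ 2) * x₃ := mul_le_mul_of_nonneg_right e1 hx30.le
      _ ≤ (r ^ 2 - d * t ^ 2) * h := mul_le_mul_of_nonpos_left hx3l e2.le
  have e4 : (x₃ ^ 2 - h ^ 2) * t ≤ K * t := mul_le_mul_of_nonneg_right hx3u ht0
  have e5 : (r ^ 2 - d * t ^ 2) * h + K * t < 0 := by
    have h5 : ρ₁ * t ≤ t * t := mul_le_mul_of_nonneg_right htρ ht0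
    have h6 : (r ^ 2 * h + K) * t < d * h * ρ₁ * t :=
      mul_lt_mul_of_pos_right hq (lt_of_lt_of_le hρ0 htρ)
    have h7 : d * h * (ρ₁ * t) ≤ d * h * (t * t) :=
      mul_le_mul_of_nonneg_left h5 (by positivity)
    have h1t : 1 ≤ t := le_trans h1ρ htρ
    have h8 : r ^ 2 * h * 1 ≤ r ^ 2 * h * t :=
      mul_le_mul_of_nonneg_left h1t (by positivity)
    nlinarith [h6, h7, h8]
  linarith

/-- For `a,b,c,h,r > 0` and `x₃₀ > h`, with `d = min a b`, there
is `ρ₁ > max (r/√d) 0` such that at all points with `h ≤ x₃ ≤ x₃₀` and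
`x₁² + x₂² ≥ ρ₁²` the vector field satisfies `ẋ₃ + ρ̇ < 0`. -/
theorem stmt_6 (a b c h r : ℝ)
    (ha : 0 < a) (hb : 0 < b) (hc : 0 < c) (hh : 0 < h) (hr : 0 < r)
    (x₃₀ : ℝ) (hx₃₀ : h < x₃₀) :
    ∃ ρ₁ : ℝ, max (r / Real.sqrt (min a b)) 0 < ρ₁ ∧
      ∀ x₁ x₂ x₃ : ℝ, h ≤ x₃ → x₃ ≤ x₃₀ → ρ₁ ^ 2 ≤ x₁ ^ 2 + x₂ ^ 2 →
        (r ^ 2 - a * x₁ ^ 2 - b * x₂ ^ 2 - c * x₃ ^ 2) * x₃ +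
          (x₃ ^ 2 - h ^ 2) * Real.sqrt (x₁ ^ 2 + x₂ ^ 2) < 0 := by
  obtain ⟨d, hdd⟩ : ∃ d, d = min a b := ⟨_, rfl⟩
  have hd : 0 < d := hdd ▸ lt_min ha hb
  have hsd : 0 < Real.sqrt d := Real.sqrt_pos.2 hd
  obtain ⟨K, hKdef⟩ : ∃ K, K = x₃₀ ^ 2 - h ^ 2 := ⟨_, rfl⟩
  have hK0 : 0 < K := by rw [hKdef]; nlinarith
  obtain ⟨M, hMdef⟩ : ∃ M, M = max (r / Real.sqrt d) 0 := ⟨_, rfl⟩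
  have hM0 : 0 ≤ M := hMdef ▸ le_max_right _ _
  have hq0 : 0 < (r ^ 2 * h + K) / (d * h) := by positivity
  obtain ⟨ρ₁, hρdef⟩ : ∃ ρ₁, ρ₁ = M + 1 + (r ^ 2 * h + K) / (d * h) := ⟨_, rfl⟩
  have hmax : M < ρ₁ := by rw [hρdef]; linarith
  have hρ0 : 0 < ρ₁ := lt_of_le_of_lt hM0 hmax
  have h1ρ : 1 ≤ ρ₁ := by rw [hρdef]; linarith
  have hq : r ^ 2 * h + K < d * h * ρ₁ := by
    have h1 : (r ^ 2 * h + K) / (d * h) < ρ₁ := by rw [hρdef]; linarith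
    calc r ^ 2 * h + K = (r ^ 2 * h + K) / (d * h) * (d * h) := by field_simp
      _ < ρ₁ * (d * h) := mul_lt_mul_of_pos_right h1 (by positivity)
      _ = d * h * ρ₁ := by ring
  have hrρ : r < Real.sqrt d * ρ₁ := by
    have h1 : r / Real.sqrt d < ρ₁ := lt_of_le_of_lt (hMdef ▸ le_max_left _ _ : r / Real.sqrt d ≤ M) hmax
    have := (div_lt_iff₀ hsd).1 h1
    linarith
  have hr2 : r ^ 2 < d * ρ₁ ^ 2 := by
    have h2 : r * r < (Real.sqrt d * ρ₁) * (Real.sqrt d * ρ₁) :=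
      mul_self_lt_mul_self hr.le hrρ
    have h3 : Real.sqrt d * Real.sqrt d = d := Real.mul_self_sqrt hd.le
    nlinarith
  refine ⟨ρ₁, hdd ▸ hMdef ▸ hmax, fun x₁ x₂ x₃ hx3l hx3u hS => ?_⟩
  have hx30 : 0 < x₃ := lt_of_lt_of_le hh hx3l
  have hx2 : x₃ ^ 2 - h ^ 2 ≤ K := by
    rw [hKdef]
    nlinarith
  exact stmt_6_aux a b c h r d K ρ₁ hd (hdd ▸ min_le_left a b) (hdd ▸ min_le_right a b)
    hc.le hh hK0 hρ0 h1ρ hr2 hq x₁ x₂ x₃ hx3l hx2 hS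
end

section
/- (Proposition 3.1.) Let a, b, c, h, r, ω > 0, let x₃₀ > h and R₀ ≥ 0. Then there exists M > 0 such that for every T > 0 and every solution x : [0, T] → ℝ³ of the system x'(t) = f(x(t)) satisfying √(x₁(0)² + x₂(0)²) ≤ R₀, x₃(0) ≤ x₃₀, and h ≤ x₃(t) ≤ x₃₀ for all t ∈ [0, T], one has √(x₁(t)² + x₂(t)²) ≤ M for all t ∈ [0, T]. (Consequently, trajectories with initial conditions in region 1 can enter region 2 only with a finite maximal value of ρ, where this maximal value depends on the initial condition.) -/
lemma sublevel_invariant {T C : ℝ} {g g' : ℝ → ℝ}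
    (hderiv : ∀ t ∈ Set.Icc (0:ℝ) T, HasDerivWithinAt g (g' t) (Set.Icc 0 T) t)
    (hC : ∀ t ∈ Set.Icc (0:ℝ) T, C ≤ g t → g' t ≤ 0) :
    ∀ t ∈ Set.Icc (0:ℝ) T, g t ≤ max (g 0) C := by
  intro t ht
  by_contra hgt
  push_neg at hgt
  set K := max (g 0) C with hK
  have hcont : ContinuousOn g (Set.Icc 0 T) := fun τ hτ => (hderiv τ hτ).continuousWithinAt
  have hsubt : Set.Icc (0:ℝ) t ⊆ Set.Icc (0:ℝ) T := Set.Icc_subset_Icc le_rfl ht.2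
  set S := Set.Icc (0:ℝ) t ∩ g ⁻¹' Set.Iic K with hS
  have h0S : (0:ℝ) ∈ S := ⟨⟨le_refl _, ht.1⟩, show g 0 ≤ K from le_max_left _ _⟩
  have hSclosed : IsClosed S :=
    (hcont.mono hsubt).preimage_isClosed_of_isClosed isClosed_Icc isClosed_Iic
  have hSbdd : BddAbove S := BddAbove.mono Set.inter_subset_left bddAbove_Icc
  set s := sSup S with hs
  have hsS : s ∈ S := hSclosed.csSup_mem ⟨0, h0S⟩ hSbdd
  have hst : s < t := by
    rcases lt_or_eq_of_le hsS.1.2 with h | h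
    · exact h
    · exfalso; rw [h] at hsS; exact absurd hsS.2 (not_le.mpr hgt)
  have hs0 : 0 ≤ s := hsS.1.1
  -- points strictly between s and t exceed K
  have hmid : ∀ τ ∈ Set.Ioo s t, K < g τ := by
    intro τ hτ
    by_contra hle
    push_neg at hle
    have : τ ∈ S := ⟨⟨hs0.trans hτ.1.le, hτ.2.le⟩, hle⟩
    exact absurd (le_csSup hSbdd this) (not_le.mpr hτ.1)
  -- g is antitone on [s, t]
  have hanti : AntitoneOn g (Set.Icc s t) := by
    apply antitoneOn_of_deriv_nonpos (convex_Icc s t)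
    · exact hcont.mono (Set.Icc_subset_Icc hs0 ht.2)
    · intro τ hτ
      rw [interior_Icc] at hτ
      have hτT : τ ∈ Set.Icc (0:ℝ) T := ⟨hs0.trans hτ.1.le, hτ.2.le.trans ht.2⟩
      have hdτ : HasDerivAt g (g' τ) τ :=
        (hderiv τ hτT).hasDerivAt (Icc_mem_nhds (lt_of_le_of_lt hs0 hτ.1)
          (lt_of_lt_of_le hτ.2 ht.2))
      exact hdτ.differentiableAt.differentiableWithinAt
    · intro τ hτ
      rw [interior_Icc] at hτ
      have hτT : τ ∈ Set.Icc (0:ℝ) T := ⟨hs0.trans hτ.1.le, hτ.2.le.trans ht.2⟩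
      have hdτ : HasDerivAt g (g' τ) τ :=
        (hderiv τ hτT).hasDerivAt (Icc_mem_nhds (lt_of_le_of_lt hs0 hτ.1)
          (lt_of_lt_of_le hτ.2 ht.2))
      rw [hdτ.deriv]
      exact hC τ hτT ((le_max_right _ _).trans (hmid τ hτ).le)
  have hmidpt : (s + t) / 2 ∈ Set.Ioo s t := ⟨by linarith, by linarith⟩
  have h1 : g t ≤ g ((s+t)/2) :=
    hanti ⟨hmidpt.1.le, hmidpt.2.le⟩ ⟨by linarith [hmidpt.1], le_refl t⟩ hmidpt.2.le
  -- and also g ((s+t)/2) ≤ g (something close to s)... instead: continuity at s gives g s ≥ K? 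
  -- simpler: antitone on [s,t] means g on Ioo is ≤ values near s; use that g (3s+t)/4 ≥ g((s+t)/2) > K and g s ≤ K with antitone s ≤ ...
  have h2 : g ((s+t)/2) ≤ g s :=
    hanti ⟨le_refl s, hst.le⟩ ⟨hmidpt.1.le, hmidpt.2.le⟩ hmidpt.1.le
  have := hmid _ hmidpt
  have hgs : g s ≤ K := hsS.2
  linarith [hgt]

set_option maxHeartbeats 1000000 in
/-- Proposition 3.1: Trajectories of the candidate chaotic
system that stay in the slab `h ≤ x₃ ≤ x₃₀` and start with radius at most `R₀`
have radius bounded by a constant `M` depending only on the parameters, `x₃₀`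
and `R₀`. -/
theorem stmt_7 (a b c h r ω : ℝ)
    (ha : 0 < a) (hb : 0 < b) (hc : 0 < c) (hh : 0 < h) (hr : 0 < r) (hω : 0 < ω)
    (x₃₀ : ℝ) (hx₃₀ : h < x₃₀) (R₀ : ℝ) (hR₀ : 0 ≤ R₀) :
    ∃ M : ℝ, 0 < M ∧
      ∀ T : ℝ, 0 < T →
      ∀ x₁ x₂ x₃ : ℝ → ℝ,
        (∀ t ∈ Set.Icc (0:ℝ) T, HasDerivWithinAt x₁
          ((x₃ t ^ 2 - h ^ 2) * x₁ t - ω * x₂ t) (Set.Icc 0 T) t) →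
        (∀ t ∈ Set.Icc (0:ℝ) T, HasDerivWithinAt x₂
          (ω * x₁ t + (x₃ t ^ 2 - h ^ 2) * x₂ t) (Set.Icc 0 T) t) →
        (∀ t ∈ Set.Icc (0:ℝ) T, HasDerivWithinAt x₃
          ((r ^ 2 - a * x₁ t ^ 2 - b * x₂ t ^ 2 - c * x₃ t ^ 2) * x₃ t)
          (Set.Icc 0 T) t) →
        Real.sqrt (x₁ 0 ^ 2 + x₂ 0 ^ 2) ≤ R₀ →
        x₃ 0 ≤ x₃₀ →
        (∀ t ∈ Set.Icc (0:ℝ) T, h ≤ x₃ t ∧ x₃ t ≤ x₃₀) →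
        ∀ t ∈ Set.Icc (0:ℝ) T, Real.sqrt (x₁ t ^ 2 + x₂ t ^ 2) ≤ M := by
  set m := min a b with hm
  have hm0 : 0 < m := lt_min ha hb
  set L : ℝ := 2 / c with hL
  have hL0 : 0 < L := by positivity
  have hLc : L * c = 2 := by rw [hL]; field_simp
  set Xh : ℝ := Real.exp (L * Real.log h) with hXh
  set X0 : ℝ := Real.exp (L * Real.log x₃₀) with hX0
  have hXhpos : 0 < Xh := Real.exp_pos _
  have hX0pos : 0 < X0 := Real.exp_pos _
  set C : ℝ := X0 * (r ^ 2 / m) with hCdef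
  have hCpos : 0 < C := by positivity
  set K : ℝ := max (R₀ ^ 2 * X0) C with hKdef
  refine ⟨1 + Real.sqrt (K / Xh), by positivity, ?_⟩
  intro T hT x₁ x₂ x₃ hd1 hd2 hd3 hinit hx30le hslab t ht
  set E : ℝ → ℝ := fun s => Real.exp (L * Real.log (x₃ s)) with hEdef
  set u : ℝ → ℝ := fun s => x₁ s ^ 2 + x₂ s ^ 2 with hudef
  set V : ℝ → ℝ := fun s => u s * E s with hVdef
  set V' : ℝ → ℝ := fun s =>
    (2 * (x₃ s ^ 2 - h ^ 2) * u s) * E s +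
      u s * (E s * (L * (((r ^ 2 - a * x₁ s ^ 2 - b * x₂ s ^ 2 - c * x₃ s ^ 2) * x₃ s)
        / x₃ s))) with hV'def
  have hx3pos : ∀ τ ∈ Set.Icc (0:ℝ) T, 0 < x₃ τ := fun τ hτ => hh.trans_le (hslab τ hτ).1
  have hu0 : ∀ τ, 0 ≤ u τ := fun τ => by positivity
  have hEup : ∀ τ ∈ Set.Icc (0:ℝ) T, E τ ≤ X0 := by
    intro τ hτ
    exact Real.exp_le_exp.mpr (mul_le_mul_of_nonneg_left
      (Real.log_le_log (hx3pos τ hτ) (hslab τ hτ).2) hL0.le)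
  have hEdown : ∀ τ ∈ Set.Icc (0:ℝ) T, Xh ≤ E τ := by
    intro τ hτ
    exact Real.exp_le_exp.mpr (mul_le_mul_of_nonneg_left
      (Real.log_le_log hh (hslab τ hτ).1) hL0.le)
  -- derivative of V
  have hVderiv : ∀ τ ∈ Set.Icc (0:ℝ) T, HasDerivWithinAt V (V' τ) (Set.Icc 0 T) τ := by
    intro τ hτ
    have hu' : HasDerivWithinAt u (2 * (x₃ τ ^ 2 - h ^ 2) * u τ) (Set.Icc 0 T) τ := by
      have h1 := ((hd1 τ hτ).pow 2).add ((hd2 τ hτ).pow 2)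
      refine h1.congr_deriv ?_
      push_cast
      simp only [hudef]
      ring
    have hlog : HasDerivWithinAt (fun s => L * Real.log (x₃ s))
        (L * (((r ^ 2 - a * x₁ τ ^ 2 - b * x₂ τ ^ 2 - c * x₃ τ ^ 2) * x₃ τ) / x₃ τ))
        (Set.Icc 0 T) τ :=
      ((hd3 τ hτ).log (ne_of_gt (hx3pos τ hτ))).const_mul L
    have hE' : HasDerivWithinAt E
        (E τ * (L * (((r ^ 2 - a * x₁ τ ^ 2 - b * x₂ τ ^ 2 - c * x₃ τ ^ 2) * x₃ τ) / x₃ τ)))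
        (Set.Icc 0 T) τ := by
      have := (Real.hasDerivAt_exp (L * Real.log (x₃ τ))).comp_hasDerivWithinAt τ hlog
      exact this
    exact hu'.mul hE'
  -- V' is nonpositive when V is large
  have hCcond : ∀ τ ∈ Set.Icc (0:ℝ) T, C ≤ V τ → V' τ ≤ 0 := by
    intro τ hτ hCV
    have hx3 : 0 < x₃ τ := hx3pos τ hτ
    have hEpos : 0 < E τ := Real.exp_pos _
    have hdiv : ((r ^ 2 - a * x₁ τ ^ 2 - b * x₂ τ ^ 2 - c * x₃ τ ^ 2) * x₃ τ) / x₃ τ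
        = r ^ 2 - a * x₁ τ ^ 2 - b * x₂ τ ^ 2 - c * x₃ τ ^ 2 :=
      mul_div_cancel_right₀ _ (ne_of_gt hx3)
    -- from C ≤ V τ deduce r^2/m ≤ u τ
    have hub : r ^ 2 / m ≤ u τ := by
      have h1 : (r ^ 2 / m) * E τ ≤ u τ * E τ := by
        calc (r ^ 2 / m) * E τ ≤ (r ^ 2 / m) * X0 :=
              mul_le_mul_of_nonneg_left (hEup τ hτ) (by positivity)
          _ = X0 * (r ^ 2 / m) := mul_comm _ _
          _ ≤ u τ * E τ := hCV
      exact le_of_mul_le_mul_right h1 hEpos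
    have hmu : r ^ 2 ≤ m * u τ := by
      rw [div_le_iff₀ hm0] at hub; linarith [hub]
    have hbr : r ^ 2 - a * x₁ τ ^ 2 - b * x₂ τ ^ 2 ≤ 0 := by
      have h1 : m * x₁ τ ^ 2 ≤ a * x₁ τ ^ 2 :=
        mul_le_mul_of_nonneg_right (min_le_left a b) (sq_nonneg _)
      have h2 : m * x₂ τ ^ 2 ≤ b * x₂ τ ^ 2 :=
        mul_le_mul_of_nonneg_right (min_le_right a b) (sq_nonneg _)
      have : m * u τ = m * x₁ τ ^ 2 + m * x₂ τ ^ 2 := by simp only [hudef]; ring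
      linarith
    have hbr2 : L * (r ^ 2 - a * x₁ τ ^ 2 - b * x₂ τ ^ 2) ≤ 0 :=
      mul_nonpos_of_nonneg_of_nonpos hL0.le hbr
    have heq : V' τ = E τ * u τ * (-(2 * h ^ 2) + L * (r ^ 2 - a * x₁ τ ^ 2 - b * x₂ τ ^ 2))
        + E τ * u τ * x₃ τ ^ 2 * (2 - L * c) := by
      simp only [hV'def, hdiv]; ring
    rw [heq, hLc]
    have hnn : 0 ≤ E τ * u τ := mul_nonneg hEpos.le (hu0 τ)
    have : E τ * u τ * (-(2 * h ^ 2) + L * (r ^ 2 - a * x₁ τ ^ 2 - b * x₂ τ ^ 2)) ≤ 0 := by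
      apply mul_nonpos_of_nonneg_of_nonpos hnn
      nlinarith [sq_nonneg h]
    linarith [this]
  -- apply the invariance lemma
  have hVbound := sublevel_invariant hVderiv hCcond t ht
  have h0mem : (0:ℝ) ∈ Set.Icc (0:ℝ) T := ⟨le_refl _, hT.le⟩
  have hV0 : V 0 ≤ R₀ ^ 2 * X0 := by
    have hu0le : u 0 ≤ R₀ ^ 2 := by
      have hs := Real.sq_sqrt (hu0 0)
      nlinarith [hinit, Real.sqrt_nonneg (x₁ 0 ^ 2 + x₂ 0 ^ 2), hs]
    exact mul_le_mul hu0le (hEup 0 h0mem) (Real.exp_pos _).le (by positivity)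
  have hVK : V t ≤ K := hVbound.trans (max_le_max hV0 (le_refl C))
  have hutle : u t ≤ K / Xh := by
    rw [le_div_iff₀ hXhpos]
    calc u t * Xh ≤ u t * E t := mul_le_mul_of_nonneg_left (hEdown t ht) (hu0 t)
      _ ≤ K := hVK
  calc Real.sqrt (x₁ t ^ 2 + x₂ t ^ 2) ≤ Real.sqrt (K / Xh) := Real.sqrt_le_sqrt hutle
    _ ≤ 1 + Real.sqrt (K / Xh) := by linarith [Real.sqrt_nonneg (K / Xh)]
end

section
/- For parameters a, b, c, h, r, ω > 0, every solution x : [0, ∞) → ℝ³ of the system x'(t) = f(x(t)) is bounded; that is, there exists M > 0 (depending on the solution) such that ‖x(t)‖ ≤ M for all t ≥ 0. -/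
lemma trap_aux (g g' : ℝ → ℝ) (B : ℝ)
    (hd : ∀ t : ℝ, 0 ≤ t → HasDerivAt g (g' t) t)
    (hB : ∀ t : ℝ, 0 ≤ t → B ≤ g t → g' t ≤ 0) :
    ∀ t : ℝ, 0 ≤ t → g t ≤ max (g 0) B := by
  intro T hT0
  by_contra hgt
  push_neg at hgt
  set M := max (g 0) B with hM
  have hcontIci : ContinuousOn g (Set.Ici 0) := fun t ht =>
    ((hd t ht).continuousAt).continuousWithinAt
  have hT : 0 < T := by
    rcases lt_or_eq_of_le hT0 with h | h
    · exact h
    · exact absurd hgt (by simp [← h, hM, le_max_left])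
  set S : Set ℝ := Set.Icc 0 T ∩ g ⁻¹' Set.Iic M with hS
  have h0S : (0 : ℝ) ∈ S := ⟨⟨le_refl 0, hT0⟩, Set.mem_preimage.mpr (Set.mem_Iic.mpr (le_max_left _ _))⟩
  have hSne : S.Nonempty := ⟨0, h0S⟩
  have hSbdd : BddAbove S := ⟨T, fun t ht => ht.1.2⟩
  have hSclosed : IsClosed S := by
    have hsub : ContinuousOn g (Set.Icc 0 T) :=
      hcontIci.mono (fun t ht => ht.1)
    exact hsub.preimage_isClosed_of_isClosed isClosed_Icc isClosed_Iic
  set s := sSup S with hs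
  have hsS : s ∈ S := hSclosed.csSup_mem hSne hSbdd
  have hs0 : 0 ≤ s := hsS.1.1
  have hsT : s < T := lt_of_le_of_ne hsS.1.2 (fun h => by
    have := hsS.2; rw [h] at this; exact absurd this (not_le.mpr hgt))
  have hanti : AntitoneOn g (Set.Icc s T) := by
    apply antitoneOn_of_deriv_nonpos (convex_Icc s T)
    · exact hcontIci.mono (fun t ht => le_trans hs0 ht.1)
    · rw [interior_Icc]
      intro t ht
      exact ((hd t (le_trans hs0 ht.1.le)).differentiableAt).differentiableWithinAt
    · rw [interior_Icc]
      intro t ht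
      have ht0 : 0 ≤ t := le_trans hs0 ht.1.le
      have hgtM : M < g t := by
        by_contra hle
        push_neg at hle
        have : t ∈ S := ⟨⟨ht0, ht.2.le⟩, hle⟩
        exact absurd (le_csSup hSbdd this) (not_le.mpr ht.1)
      rw [(hd t ht0).deriv]
      exact hB t ht0 (le_trans (le_max_right _ _) hgtM.le)
  have := hanti ⟨le_refl s, hsT.le⟩ ⟨hsT.le, le_refl T⟩ hsT.le
  exact absurd (le_trans this hsS.2) (not_le.mpr hgt)


/-- Every solution of the candidate chaotic system on `[0,∞)` is
bounded: there is `M > 0` with `‖x(t)‖ ≤ M` for all `t ≥ 0`. -/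
theorem stmt_8 (a b c h r ω : ℝ)
    (ha : 0 < a) (hb : 0 < b) (hc : 0 < c) (hh : 0 < h) (hr : 0 < r) (hω : 0 < ω)
    (x₁ x₂ x₃ : ℝ → ℝ)
    (hx₁ : ∀ t : ℝ, 0 ≤ t → HasDerivAt x₁ ((x₃ t ^ 2 - h ^ 2) * x₁ t - ω * x₂ t) t)
    (hx₂ : ∀ t : ℝ, 0 ≤ t → HasDerivAt x₂ (ω * x₁ t + (x₃ t ^ 2 - h ^ 2) * x₂ t) t)
    (hx₃ : ∀ t : ℝ, 0 ≤ t → HasDerivAt x₃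
      ((r ^ 2 - a * x₁ t ^ 2 - b * x₂ t ^ 2 - c * x₃ t ^ 2) * x₃ t) t) :
    ∃ M : ℝ, 0 < M ∧ ∀ t : ℝ, 0 ≤ t →
      Real.sqrt (x₁ t ^ 2 + x₂ t ^ 2 + x₃ t ^ 2) ≤ M := by
  obtain ⟨m, hm, hma, hmb⟩ : ∃ m : ℝ, 0 < m ∧ m ≤ a ∧ m ≤ b :=
    ⟨min a b, lt_min ha hb, min_le_left _ _, min_le_right _ _⟩
  have hVd : ∀ t : ℝ, 0 ≤ t → HasDerivAt
      (fun s => m * x₁ s ^ 2 + m * x₂ s ^ 2 + x₃ s ^ 2)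
      (2 * m * (x₃ t ^ 2 - h ^ 2) * (x₁ t ^ 2 + x₂ t ^ 2)
        + 2 * (r ^ 2 - a * x₁ t ^ 2 - b * x₂ t ^ 2 - c * x₃ t ^ 2) * x₃ t ^ 2) t := by
    intro t ht
    have H := ((((hx₁ t ht).pow 2).const_mul m).add
      (((hx₂ t ht).pow 2).const_mul m)).add ((hx₃ t ht).pow 2)
    exact H.congr_deriv (by push_cast; ring)
  have hBpos : (0:ℝ) < r ^ 2 / c + r ^ 4 / (c * h ^ 2) := by positivity
  have hkey : ∀ t : ℝ, 0 ≤ t →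
      r ^ 2 / c + r ^ 4 / (c * h ^ 2) ≤ m * x₁ t ^ 2 + m * x₂ t ^ 2 + x₃ t ^ 2 →
      2 * m * (x₃ t ^ 2 - h ^ 2) * (x₁ t ^ 2 + x₂ t ^ 2)
        + 2 * (r ^ 2 - a * x₁ t ^ 2 - b * x₂ t ^ 2 - c * x₃ t ^ 2) * x₃ t ^ 2 ≤ 0 := by
    intro t ht hat
    have hp0 : (0:ℝ) ≤ x₁ t ^ 2 + x₂ t ^ 2 := by positivity
    have hw0 : (0:ℝ) ≤ x₃ t ^ 2 := sq_nonneg _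
    -- bound the cross coupling: m*(x₁²+x₂²)*x₃² ≤ (a x₁² + b x₂²)*x₃²
    have hcouple : m * (x₁ t ^ 2 + x₂ t ^ 2) * x₃ t ^ 2
        ≤ (a * x₁ t ^ 2 + b * x₂ t ^ 2) * x₃ t ^ 2 := by
      apply mul_le_mul_of_nonneg_right _ hw0
      nlinarith [mul_le_mul_of_nonneg_right hma (sq_nonneg (x₁ t)),
        mul_le_mul_of_nonneg_right hmb (sq_nonneg (x₂ t))]
    -- so it suffices to bound E := -2mh²p + 2r²w - 2cw²
    have hE : -2 * m * h ^ 2 * (x₁ t ^ 2 + x₂ t ^ 2) + 2 * r ^ 2 * x₃ t ^ 2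
        - 2 * c * (x₃ t ^ 2) ^ 2 ≤ 0 := by
      set p : ℝ := x₁ t ^ 2 + x₂ t ^ 2 with hp
      set w : ℝ := x₃ t ^ 2 with hw
      rcases le_or_gt (r ^ 2) (c * w) with hcase | hcase
      · nlinarith [mul_le_mul_of_nonneg_right hcase hw0,
          mul_nonneg (mul_nonneg hm.le (sq_nonneg h)) hp0]
      · have hwle : w ≤ r ^ 2 / c := by
          rw [le_div_iff₀ hc]; linarith
        have hmp : r ^ 4 / (c * h ^ 2) ≤ m * p := by linarith
        have hq1 : r ^ 4 ≤ c * h ^ 2 * (m * p) := by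
          rw [div_le_iff₀ (by positivity : (0:ℝ) < c * h ^ 2)] at hmp
          linarith
        have hq2 : c * (r ^ 2 * w) < r ^ 4 := by
          linarith [mul_lt_mul_of_pos_left hcase (pow_pos hr 2)]
        have hq3 : c * (r ^ 2 * w) < c * (h ^ 2 * (m * p)) := by linarith
        have hq4 : r ^ 2 * w ≤ h ^ 2 * (m * p) :=
          (lt_of_mul_lt_mul_left hq3 hc.le).le
        nlinarith [mul_nonneg hc.le (sq_nonneg w)]
    nlinarith [hcouple, hE]
  have hbound := trap_aux (fun s => m * x₁ s ^ 2 + m * x₂ s ^ 2 + x₃ s ^ 2)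
    (fun t => 2 * m * (x₃ t ^ 2 - h ^ 2) * (x₁ t ^ 2 + x₂ t ^ 2)
        + 2 * (r ^ 2 - a * x₁ t ^ 2 - b * x₂ t ^ 2 - c * x₃ t ^ 2) * x₃ t ^ 2)
    (r ^ 2 / c + r ^ 4 / (c * h ^ 2)) hVd hkey
  obtain ⟨M₀, hM₀⟩ : ∃ M₀ : ℝ, M₀ = max (m * x₁ 0 ^ 2 + m * x₂ 0 ^ 2 + x₃ 0 ^ 2)
    (r ^ 2 / c + r ^ 4 / (c * h ^ 2)) := ⟨_, rfl⟩
  rw [← hM₀] at hbound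
  have hM₀pos : 0 < M₀ := hM₀ ▸ lt_of_lt_of_le hBpos (le_max_right _ _)
  refine ⟨Real.sqrt (M₀ / m + M₀), Real.sqrt_pos.mpr (by positivity), fun t ht => ?_⟩
  have hVt : m * x₁ t ^ 2 + m * x₂ t ^ 2 + x₃ t ^ 2 ≤ M₀ := hbound t ht
  apply Real.sqrt_le_sqrt
  have h12 : x₁ t ^ 2 + x₂ t ^ 2 ≤ M₀ / m := by
    rw [le_div_iff₀ hm]
    linarith [sq_nonneg (x₃ t)]
  have h3 : x₃ t ^ 2 ≤ M₀ := by
    linarith [mul_nonneg hm.le (sq_nonneg (x₁ t)), mul_nonneg hm.le (sq_nonneg (x₂ t))]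
  linarith
end

section
/- Let c, r > 0 and let u : [0, ∞) → ℝ be a differentiable function satisfying u'(t) = (r² − c·u(t)²)·u(t) for all t ≥ 0, with u(0) > 0. Then u(t) → r/√c as t → ∞. (This expresses that the stable manifold of the equilibrium Z = (0, 0, r/√c) of the system contains the positive x₃-axis {(0,0,x₃) : x₃ > 0}.) -/
open Set Filter Topology

private lemma aux_const (f : ℝ → ℝ)
    (hd : ∀ t : ℝ, 0 ≤ t → HasDerivWithinAt f 0 (Set.Ici t) t)
    (hc : ∀ t : ℝ, 0 < t → ContinuousAt f t) :
    ∀ T : ℝ, 0 ≤ T → f T = f 0 := by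
  intro T hT
  have hcont : ContinuousOn f (Set.Icc 0 T) := by
    intro x hx
    rcases eq_or_lt_of_le hx.1 with h | h
    · exact h ▸ (hd 0 le_rfl).continuousWithinAt.mono Set.Icc_subset_Ici_self
    · exact (hc x h).continuousWithinAt
  exact constant_of_has_deriv_right_zero hcont (fun x hx => hd x hx.1) T
    (Set.right_mem_Icc.2 hT)

/-- A solution of the scalar equation `u' = (r² − cu²)u` on
`[0,∞)` with `u(0) > 0` converges to `r/√c` as `t → ∞` (the stable manifold of
the equilibrium `Z = (0,0,r/√c)` contains the positive `x₃`-axis). -/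
theorem stmt_9 (c r : ℝ) (hc : 0 < c) (hr : 0 < r)
    (u : ℝ → ℝ)
    (hu : ∀ t : ℝ, 0 ≤ t → HasDerivAt u ((r ^ 2 - c * u t ^ 2) * u t) t)
    (h0 : 0 < u 0) :
    Filter.Tendsto u Filter.atTop (nhds (r / Real.sqrt c)) := by
  set g : ℝ → ℝ := fun s => r ^ 2 - c * u s ^ 2 with hgdef
  have hucont : ∀ t : ℝ, 0 ≤ t → ContinuousAt u t := fun t ht => (hu t ht).continuousAt
  have hgcont : ∀ t : ℝ, 0 ≤ t → ContinuousAt g t := fun t ht =>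
    continuousAt_const.sub (continuousAt_const.mul ((hucont t ht).pow 2))
  set F : ℝ → ℝ := fun t => ∫ s in (0:ℝ)..t, g s with hFdef
  have hgint : ∀ t : ℝ, 0 ≤ t → IntervalIntegrable g MeasureTheory.volume 0 t := by
    intro t ht
    apply ContinuousOn.intervalIntegrable
    rw [Set.uIcc_of_le ht]
    exact fun x hx => (hgcont x hx.1).continuousWithinAt
  have hgmeas : ∀ t : ℝ, 0 ≤ t →
      StronglyMeasurableAtFilter g (nhdsWithin t (Set.Ioi t)) MeasureTheory.volume := by
    intro t ht
    refine ⟨Set.Ioi t, self_mem_nhdsWithin, ?_⟩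
    have hg1 : ContinuousOn g (Set.Ioi t) := fun x hx =>
      (hgcont x (le_of_lt (lt_of_le_of_lt ht hx))).continuousWithinAt
    exact hg1.aestronglyMeasurable measurableSet_Ioi
  have hF : ∀ t : ℝ, 0 ≤ t → HasDerivWithinAt F (g t) (Set.Ici t) t := by
    intro t ht
    exact intervalIntegral.integral_hasDerivWithinAt_right (hgint t ht) (hgmeas t ht)
      ((hgcont t ht).continuousWithinAt)
  have hFcont : ∀ t : ℝ, 0 < t → ContinuousAt F t := by
    intro t ht
    have hm : StronglyMeasurableAtFilter g (nhds t) MeasureTheory.volume := by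
      refine ⟨Set.Ioi 0, Ioi_mem_nhds ht, ?_⟩
      have hg1 : ContinuousOn g (Set.Ioi 0) := fun x hx =>
        (hgcont x (le_of_lt hx)).continuousWithinAt
      exact hg1.aestronglyMeasurable measurableSet_Ioi
    exact (intervalIntegral.integral_hasDerivAt_right (hgint t ht.le) hm
      (hgcont t ht.le)).continuousAt
  -- Step A: u is positive on [0, ∞)
  have hP : ∀ T : ℝ, 0 ≤ T → u T * Real.exp (-F T) = u 0 * Real.exp (-F 0) := by
    apply aux_const
    · intro t ht
      have h1 : HasDerivWithinAt (fun s => Real.exp (-F s))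
          (Real.exp (-F t) * (-g t)) (Set.Ici t) t := ((hF t ht).neg).exp
      have h2 : HasDerivWithinAt (fun s => u s * Real.exp (-F s)) _ (Set.Ici t) t :=
        ((hu t ht).hasDerivWithinAt (s := Set.Ici t)).mul h1
      convert h2 using 1
      simp only [hgdef]
      ring
    · intro t ht
      exact (hucont t ht.le).mul
        (Real.continuous_exp.continuousAt.comp ((hFcont t ht).neg))
  have hpos : ∀ t : ℝ, 0 ≤ t → 0 < u t := by
    intro t ht
    have h1 := hP t ht
    have hF0 : F 0 = 0 := intervalIntegral.integral_same
    rw [hF0] at h1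
    simp only [neg_zero, Real.exp_zero, mul_one] at h1
    nlinarith [Real.exp_pos (-F t)]
  -- Step B: H t = exp(2r²t) * ((u t)⁻² − c/r²) is constant
  set K : ℝ := (u 0 ^ 2)⁻¹ - c / r ^ 2 with hKdef
  have hH : ∀ t : ℝ, 0 ≤ t →
      Real.exp (2 * r ^ 2 * t) * ((u t ^ 2)⁻¹ - c / r ^ 2) = K := by
    have := aux_const (fun t => Real.exp (2 * r ^ 2 * t) * ((u t ^ 2)⁻¹ - c / r ^ 2))
      ?_ ?_
    · intro t ht
      have h1 := this t ht
      simpa using h1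
    · intro t ht
      have hne : u t ≠ 0 := (hpos t ht).ne'
      have hne2 : u t ^ 2 ≠ 0 := pow_ne_zero 2 hne
      have he : HasDerivWithinAt (fun s => Real.exp (2 * r ^ 2 * s))
          (Real.exp (2 * r ^ 2 * t) * (2 * r ^ 2 * 1)) (Set.Ici t) t :=
        (((hasDerivAt_id t).const_mul (2 * r ^ 2)).exp).hasDerivWithinAt
      have hsq : HasDerivWithinAt (fun s => u s ^ 2)
          ((2 : ℕ) * u t ^ 1 * ((r ^ 2 - c * u t ^ 2) * u t)) (Set.Ici t) t :=
        ((hu t ht).hasDerivWithinAt (s := Set.Ici t)).pow 2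
      have hinv := hsq.inv hne2
      have hsub := hinv.sub_const (c / r ^ 2)
      have hmul : HasDerivWithinAt (fun s => Real.exp (2 * r ^ 2 * s) * ((u s ^ 2)⁻¹ - c / r ^ 2))
          _ (Set.Ici t) t := he.mul hsub
      convert hmul using 1
      have hrne : r ≠ 0 := hr.ne'
      field_simp
      ring
    · intro t ht
      have hne2 : u t ^ 2 ≠ 0 := pow_ne_zero 2 (hpos t ht.le).ne'
      exact (Real.continuous_exp.continuousAt.comp
        ((continuousAt_const.mul continuousAt_id)))
        |>.mul ((((hucont t ht.le).pow 2).inv₀ hne2).sub continuousAt_const)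
  have hform : ∀ t : ℝ, 0 ≤ t →
      (u t ^ 2)⁻¹ = c / r ^ 2 + K * Real.exp (-(2 * r ^ 2 * t)) := by
    intro t ht
    have h1 := hH t ht
    have he : Real.exp (2 * r ^ 2 * t) ≠ 0 := Real.exp_ne_zero _
    have h2 : (u t ^ 2)⁻¹ - c / r ^ 2 = K / Real.exp (2 * r ^ 2 * t) := by
      rw [eq_div_iff he, mul_comm]; exact h1
    rw [Real.exp_neg, ← div_eq_mul_inv, ← h2]
    ring
  -- Step C: take the limit
  have hexp_lim : Tendsto (fun t : ℝ => Real.exp (-(2 * r ^ 2 * t))) atTop (𝓝 0) := by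
    apply Real.tendsto_exp_atBot.comp
    exact tendsto_neg_atTop_atBot.comp (tendsto_id.const_mul_atTop (by positivity))
  have h1 : Tendsto (fun t => (u t ^ 2)⁻¹) atTop (𝓝 (c / r ^ 2)) := by
    have h2 : Tendsto (fun t : ℝ => c / r ^ 2 + K * Real.exp (-(2 * r ^ 2 * t)))
        atTop (𝓝 (c / r ^ 2 + K * 0)) :=
      tendsto_const_nhds.add (tendsto_const_nhds.mul hexp_lim)
    rw [mul_zero, add_zero] at h2
    exact h2.congr' ((eventually_ge_atTop 0).mono fun t ht => (hform t ht).symm)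
  have h2 : Tendsto (fun t => u t ^ 2) atTop (𝓝 (r ^ 2 / c)) := by
    have h3 := h1.inv₀ (by positivity)
    rw [inv_div] at h3
    exact h3.congr' ((eventually_ge_atTop 0).mono fun t ht =>
      inv_inv (u t ^ 2))
  have h3 : Tendsto (fun t => Real.sqrt (u t ^ 2)) atTop (𝓝 (Real.sqrt (r ^ 2 / c))) :=
    h2.sqrt
  have hsq : Real.sqrt (r ^ 2 / c) = r / Real.sqrt c := by
    rw [Real.sqrt_div (by positivity), Real.sqrt_sq hr.le]
  rw [hsq] at h3
  exact h3.congr' ((eventually_ge_atTop 0).mono fun t ht =>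
    Real.sqrt_sq (hpos t ht).le)
end

section
/- Let c, r > 0 and let u : ℝ → ℝ be a differentiable function satisfying u'(t) = (r² − c·u(t)²)·u(t) for all t ∈ ℝ, with 0 < u(0) < r/√c. Then 0 < u(t) < r/√c for all t ∈ ℝ, and u(t) → 0 as t → −∞. (This expresses that the unstable manifold of the origin O = (0,0,0) of the system equals {(0, 0, x₃) : 0 < |x₃| < r/√c}.) -/
open Set Filter

/-- If a solution of `u' = (r² − cu²)u` hits an equilibrium `p` at some time,
then it equals `p` at time `0`. -/
lemma stmt10_aux (c r : ℝ) (hc : 0 < c) (u : ℝ → ℝ)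
    (hu : ∀ t : ℝ, HasDerivAt u ((r ^ 2 - c * u t ^ 2) * u t) t)
    (p t₁ : ℝ) (hp : (r ^ 2 - c * p ^ 2) * p = 0) (h1 : u t₁ = p) : u 0 = p := by
  have hcont : Continuous u := by
    have : Differentiable ℝ u := fun t => (hu t).differentiableAt
    exact this.continuous
  set a : ℝ := min t₁ 0 - 1 with ha
  set b : ℝ := max t₁ 0 + 1 with hb
  have ht₁ : t₁ ∈ Ioo a b :=
    ⟨by simp only [ha]; have := min_le_left t₁ (0:ℝ); linarith,
     by simp only [hb]; have := le_max_left t₁ (0:ℝ); linarith⟩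
  have h0ab : (0:ℝ) ∈ Icc a b :=
    ⟨by simp only [ha]; have := min_le_right t₁ (0:ℝ); linarith,
     by simp only [hb]; have := le_max_right t₁ (0:ℝ); linarith⟩
  obtain ⟨C, hC⟩ := (isCompact_Icc (a := a) (b := b)).exists_bound_of_continuousOn
      hcont.continuousOn
  set M : ℝ := max C |p| with hM
  have hM0 : 0 ≤ M := le_trans (abs_nonneg p) (le_max_right _ _)
  have hmemu : ∀ t ∈ Icc a b, u t ∈ Icc (-M) M := by
    intro t ht
    have := hC t ht
    rw [Real.norm_eq_abs] at this
    have h1 : |u t| ≤ M := le_trans this (le_max_left _ _)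
    rw [abs_le] at h1
    exact ⟨h1.1, h1.2⟩
  have hmemp : p ∈ Icc (-M) M := by
    have : |p| ≤ M := le_max_right _ _
    rw [abs_le] at this
    exact ⟨this.1, this.2⟩
  set L : NNReal := (r ^ 2 + 3 * c * M ^ 2).toNNReal with hL
  have hLcoe : (L : ℝ) = r ^ 2 + 3 * c * M ^ 2 :=
    Real.coe_toNNReal _ (by positivity)
  have hlip : ∀ t : ℝ, LipschitzOnWith L
      (fun x : ℝ => (r ^ 2 - c * x ^ 2) * x) (Icc (-M) M) := by
    intro t
    apply LipschitzOnWith.of_dist_le_mul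
    intro x hx y hy
    rw [Real.dist_eq, Real.dist_eq, hLcoe]
    have hx1 : |x| ≤ M := abs_le.mpr ⟨hx.1, hx.2⟩
    have hy1 : |y| ≤ M := abs_le.mpr ⟨hy.1, hy.2⟩
    have key : (r ^ 2 - c * x ^ 2) * x - (r ^ 2 - c * y ^ 2) * y
        = (x - y) * (r ^ 2 - c * (x ^ 2 + x * y + y ^ 2)) := by ring
    rw [key, abs_mul]
    have hx2 : x ^ 2 ≤ M ^ 2 := by nlinarith [sq_abs x, abs_nonneg x]
    have hy2 : y ^ 2 ≤ M ^ 2 := by nlinarith [sq_abs y, abs_nonneg y]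
    have hxy : |x * y| ≤ M ^ 2 := by
      rw [abs_mul]
      nlinarith [abs_nonneg x, abs_nonneg y]
    have hS : |r ^ 2 - c * (x ^ 2 + x * y + y ^ 2)| ≤ r ^ 2 + 3 * c * M ^ 2 := by
      rw [abs_le]
      constructor
      · nlinarith [neg_abs_le (x*y), le_abs_self (x*y), sq_nonneg x, sq_nonneg y]
      · nlinarith [neg_abs_le (x*y), le_abs_self (x*y), sq_nonneg x, sq_nonneg y]
    calc |x - y| * |r ^ 2 - c * (x ^ 2 + x * y + y ^ 2)|
        ≤ |x - y| * (r ^ 2 + 3 * c * M ^ 2) :=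
          mul_le_mul_of_nonneg_left hS (abs_nonneg _)
      _ = (r ^ 2 + 3 * c * M ^ 2) * |x - y| := by ring
  have heq : EqOn u (fun _ => p) (Icc a b) := by
    apply ODE_solution_unique_of_mem_Icc (v := fun _ x => (r ^ 2 - c * x ^ 2) * x)
      (s := fun _ => Icc (-M) M) (fun t _ => hlip t) ht₁ hcont.continuousOn
      (fun t _ => hu t) (fun t ht => hmemu t (Ioo_subset_Icc_self ht))
      continuousOn_const
      (fun t _ => by simpa [hp] using hasDerivAt_const t p)
      (fun t _ => hmemp)
    simp [h1]
  exact heq h0ab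

/-- A solution of the scalar equation `u' = (r² − cu²)u` on ℝ
with `0 < u(0) < r/√c` satisfies `0 < u(t) < r/√c` for all `t` and converges to
`0` as `t → −∞` (the unstable manifold of the origin equals
`{(0,0,x₃) : 0 < |x₃| < r/√c}`). -/
theorem stmt_10 (c r : ℝ) (hc : 0 < c) (hr : 0 < r)
    (u : ℝ → ℝ)
    (hu : ∀ t : ℝ, HasDerivAt u ((r ^ 2 - c * u t ^ 2) * u t) t)
    (h0 : 0 < u 0) (h0' : u 0 < r / Real.sqrt c) :
    (∀ t : ℝ, 0 < u t ∧ u t < r / Real.sqrt c) ∧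
      Filter.Tendsto u Filter.atBot (nhds 0) := by
  have hcont : Continuous u := by
    have : Differentiable ℝ u := fun t => (hu t).differentiableAt
    exact this.continuous
  set K : ℝ := r / Real.sqrt c with hKdef
  have hsc : Real.sqrt c > 0 := Real.sqrt_pos.mpr hc
  have hK : 0 < K := div_pos hr hsc
  have hcK : c * K ^ 2 = r ^ 2 := by
    rw [hKdef, div_pow, Real.sq_sqrt hc.le]
    field_simp
  -- u never hits 0
  have hne0 : ∀ t, u t ≠ 0 := by
    intro t ht
    have := stmt10_aux c r hc u hu 0 t (by ring) ht
    exact absurd this (ne_of_gt h0)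
  -- u never hits K
  have hneK : ∀ t, u t ≠ K := by
    intro t ht
    have hp : (r ^ 2 - c * K ^ 2) * K = 0 := by rw [hcK]; ring
    have := stmt10_aux c r hc u hu K t hp ht
    exact absurd this (ne_of_lt h0')
  -- positivity via IVT
  have hpos : ∀ t, 0 < u t := by
    intro t
    by_contra h
    push_neg at h
    have hmem : (0:ℝ) ∈ uIcc (u t) (u 0) := by
      rw [Set.mem_uIcc]; left; exact ⟨h, h0.le⟩
    obtain ⟨s, _, hs⟩ := intermediate_value_uIcc (hcont.continuousOn) hmem
    exact hne0 s hs
  -- upper bound via IVT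
  have hlt : ∀ t, u t < K := by
    intro t
    by_contra h
    push_neg at h
    have hmem : K ∈ uIcc (u 0) (u t) := by
      rw [Set.mem_uIcc]; left; exact ⟨h0'.le, h⟩
    obtain ⟨s, _, hs⟩ := intermediate_value_uIcc (hcont.continuousOn) hmem
    exact hneK s hs
  refine ⟨fun t => ⟨hpos t, hlt t⟩, ?_⟩
  -- monotonicity
  have hderivpos : ∀ t, 0 < (r ^ 2 - c * u t ^ 2) * u t := by
    intro t
    have h1 := hpos t
    have h2 := hlt t
    have : c * u t ^ 2 < r ^ 2 := by
      rw [← hcK]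
      have : u t ^ 2 < K ^ 2 := by nlinarith
      nlinarith
    nlinarith
  have hmono : StrictMono u := strictMono_of_hasDerivAt_pos hu hderivpos
  have hbdd : BddBelow (Set.range u) := ⟨0, by rintro x ⟨t, rfl⟩; exact (hpos t).le⟩
  have htend : Tendsto u atBot (nhds (⨅ t, u t)) := tendsto_atBot_ciInf hmono.monotone hbdd
  set Linf : ℝ := ⨅ t, u t with hLinf
  have hL0 : 0 ≤ Linf := le_ciInf fun t => (hpos t).le
  have hLle : ∀ t, Linf ≤ u t := fun t => ciInf_le hbdd t
  have hLzero : Linf = 0 := by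
    by_contra hne
    have hLpos : 0 < Linf := lt_of_le_of_ne hL0 (Ne.symm hne)
    set δ : ℝ := (r ^ 2 - c * (u 0) ^ 2) * Linf with hδ
    have hδpos : 0 < δ := by
      have hsq : u 0 ^ 2 < K ^ 2 := by nlinarith [hpos 0, hlt 0]
      have : c * (u 0) ^ 2 < r ^ 2 := by rw [← hcK]; nlinarith
      apply mul_pos (by linarith) hLpos
    -- u t ≤ u 0 + δ t for t ≤ 0
    have hkey : ∀ t : ℝ, t ≤ 0 → u t ≤ u 0 + δ * t := by
      intro t ht
      set w : ℝ → ℝ := fun s => u s - δ * s with hw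
      have hwderiv : ∀ s, HasDerivAt w ((r ^ 2 - c * u s ^ 2) * u s - δ) s := by
        intro s
        have hlin : HasDerivAt (fun s : ℝ => δ * s) δ s := by
          simpa using (hasDerivAt_id s).const_mul δ
        exact (hu s).sub hlin
      have hmon : MonotoneOn w (Icc t 0) := by
        apply monotoneOn_of_deriv_nonneg (convex_Icc t 0)
          (Continuous.continuousOn (by continuity : Continuous w))
          (fun s _ => (hwderiv s).differentiableAt.differentiableWithinAt)
        intro s hs
        rw [interior_Icc] at hs
        rw [(hwderiv s).deriv]
        have hus1 : u s ≤ u 0 := (hmono.monotone hs.2.le)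
        have hus2 : Linf ≤ u s := hLle s
        have hsq : u s ^ 2 ≤ u 0 ^ 2 := by nlinarith [hpos s]
        have h1 : r ^ 2 - c * u s ^ 2 ≥ r ^ 2 - c * (u 0) ^ 2 := by nlinarith
        have hsq0 : u 0 ^ 2 < K ^ 2 := by nlinarith [hpos 0, hlt 0]
        have h2 : 0 < r ^ 2 - c * (u 0) ^ 2 := by rw [← hcK]; nlinarith
        have : (r ^ 2 - c * u s ^ 2) * u s ≥ (r ^ 2 - c * (u 0) ^ 2) * Linf := by
          nlinarith [hpos s]
        rw [hδ]; linarith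
      have := hmon (left_mem_Icc.mpr ht) (right_mem_Icc.mpr ht) ht
      simp only [hw] at this
      linarith
    -- contradiction: choose t very negative
    set t₀ : ℝ := (Linf - u 0 - 1) / δ with ht₀
    have ht₀neg : t₀ ≤ 0 := by
      apply div_nonpos_of_nonpos_of_nonneg
      · have : Linf ≤ u 0 := hLle 0
        linarith
      · exact hδpos.le
    have h1 := hkey t₀ ht₀neg
    have h2 : u 0 + δ * t₀ = Linf - 1 := by
      rw [ht₀]; field_simp; ring
    have := hLle t₀
    rw [h2] at h1
    linarith
  rw [hLzero] at htend
  exact htend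
end

section
/- For parameters a, b, c, h, r, ω > 0, let x : [0, ∞) → ℝ³ be a solution of the system x'(t) = f(x(t)) with x₃(0) = 0. Then x₁(t)² + x₂(t)² = (x₁(0)² + x₂(0)²)·exp(−2h²t) for all t ≥ 0; in particular x(t) → (0,0,0) as t → ∞. (This expresses that the stable manifold of the origin O contains the plane {x₃ = 0}: all orbits in this plane are attracted to the origin.) -/
open Set Filter Real

/-- For a solution of the candidate chaotic system on `[0,∞)`
with `x₃(0) = 0`, one has `x₁(t)² + x₂(t)² = (x₁(0)² + x₂(0)²)·exp(−2h²t)` for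
all `t ≥ 0`; in particular `x(t) → (0,0,0)` as `t → ∞`. -/
theorem stmt_11 (a b c h r ω : ℝ)
    (ha : 0 < a) (hb : 0 < b) (hc : 0 < c) (hh : 0 < h) (hr : 0 < r) (hω : 0 < ω)
    (x₁ x₂ x₃ : ℝ → ℝ)
    (hx₁ : ∀ t : ℝ, 0 ≤ t → HasDerivAt x₁ ((x₃ t ^ 2 - h ^ 2) * x₁ t - ω * x₂ t) t)
    (hx₂ : ∀ t : ℝ, 0 ≤ t → HasDerivAt x₂ (ω * x₁ t + (x₃ t ^ 2 - h ^ 2) * x₂ t) t)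
    (hx₃ : ∀ t : ℝ, 0 ≤ t → HasDerivAt x₃
      ((r ^ 2 - a * x₁ t ^ 2 - b * x₂ t ^ 2 - c * x₃ t ^ 2) * x₃ t) t)
    (h0 : x₃ 0 = 0) :
    (∀ t : ℝ, 0 ≤ t →
      x₁ t ^ 2 + x₂ t ^ 2 = (x₁ 0 ^ 2 + x₂ 0 ^ 2) * Real.exp (-2 * h ^ 2 * t)) ∧
    Filter.Tendsto x₁ Filter.atTop (nhds 0) ∧
    Filter.Tendsto x₂ Filter.atTop (nhds 0) ∧
    Filter.Tendsto x₃ Filter.atTop (nhds 0) := by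
  set G : ℝ → ℝ := fun t => r ^ 2 - a * x₁ t ^ 2 - b * x₂ t ^ 2 - c * x₃ t ^ 2 with hG
  have hc₁ : ContinuousOn x₁ (Ici (0:ℝ)) := fun t ht => ((hx₁ t ht).continuousAt).continuousWithinAt
  have hc₂ : ContinuousOn x₂ (Ici (0:ℝ)) := fun t ht => ((hx₂ t ht).continuousAt).continuousWithinAt
  have hc₃ : ContinuousOn x₃ (Ici (0:ℝ)) := fun t ht => ((hx₃ t ht).continuousAt).continuousWithinAt
  have hcG : ContinuousOn G (Ici (0:ℝ)) :=
    ((continuousOn_const.sub (continuousOn_const.mul (hc₁.pow 2))).sub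
      (continuousOn_const.mul (hc₂.pow 2))).sub (continuousOn_const.mul (hc₃.pow 2))
  -- x₃ vanishes on [0,∞)
  have h3 : ∀ t : ℝ, 0 ≤ t → x₃ t = 0 := by
    intro T hT
    have hne : (Icc (0:ℝ) T).Nonempty := ⟨0, le_refl 0, hT⟩
    obtain ⟨s, hs, hmax⟩ := (isCompact_Icc (a := (0:ℝ)) (b := T)).exists_isMaxOn hne
      ((hcG.mono Icc_subset_Ici_self).abs)
    set K := |G s| with hK
    have key := norm_le_gronwallBound_of_norm_deriv_right_le
      (f := x₃) (f' := fun t => G t * x₃ t) (δ := 0) (K := K) (ε := 0) (a := 0) (b := T)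
      (hc₃.mono Icc_subset_Ici_self)
      (fun t ht => ((hx₃ t ht.1).hasDerivWithinAt))
      (by simp [h0])
      (fun t ht => by
        have hle : |G t| ≤ K := hmax ⟨ht.1, ht.2.le⟩
        calc ‖G t * x₃ t‖ = |G t| * ‖x₃ t‖ := by simp [abs_mul]
          _ ≤ K * ‖x₃ t‖ + 0 := by
            rw [add_zero]
            exact mul_le_mul_of_nonneg_right hle (norm_nonneg _)
        )
    have := key T ⟨hT, le_refl T⟩
    rw [gronwallBound_ε0_δ0] at this
    have h' : |x₃ T| ≤ 0 := this
    have := abs_nonneg (x₃ T)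
    have : |x₃ T| = 0 := le_antisymm h' this
    exact abs_eq_zero.mp this
  set u : ℝ → ℝ := fun t => x₁ t ^ 2 + x₂ t ^ 2 with hu
  set v : ℝ → ℝ := fun t => u t * Real.exp (2 * h ^ 2 * t) with hv
  have hvderiv : ∀ t : ℝ, 0 ≤ t → HasDerivAt v 0 t := by
    intro t ht
    have he : HasDerivAt (fun t => Real.exp (2 * h ^ 2 * t))
        (Real.exp (2 * h ^ 2 * t) * (2 * h ^ 2)) t := by
      simpa using ((hasDerivAt_id t).const_mul (2 * h ^ 2)).exp
    have hud : HasDerivAt u (-(2 * h ^ 2) * u t) t := by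
      have : HasDerivAt u _ t := (((hx₁ t ht).pow 2).add ((hx₂ t ht).pow 2))
      convert this using 1
      rw [h3 t ht]
      ring
    have : HasDerivAt v _ t := hud.mul he
    convert this using 1
    ring
  have hvconst : ∀ t : ℝ, 0 ≤ t → v t = v 0 := by
    intro t ht
    rcases eq_or_lt_of_le ht with h | h
    · rw [← h]
    · have := constant_of_has_deriv_right_zero (f := v) (a := 0) (b := t)
        (fun s hs => ((hvderiv s hs.1).continuousAt).continuousWithinAt)
        (fun s hs => (hvderiv s hs.1).hasDerivWithinAt)
      exact this t ⟨ht, le_refl t⟩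
  have main : ∀ t : ℝ, 0 ≤ t →
      x₁ t ^ 2 + x₂ t ^ 2 = (x₁ 0 ^ 2 + x₂ 0 ^ 2) * Real.exp (-2 * h ^ 2 * t) := by
    intro t ht
    have hvt := hvconst t ht
    have hE : Real.exp (2 * h ^ 2 * t) ≠ 0 := Real.exp_ne_zero _
    have : u t * Real.exp (2 * h ^ 2 * t) = u 0 := by simpa [hv] using hvt
    have hinv : Real.exp (-2 * h ^ 2 * t) = (Real.exp (2 * h ^ 2 * t))⁻¹ := by
      rw [← Real.exp_neg]; ring_nf
    show u t = u 0 * Real.exp (-2 * h ^ 2 * t)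
    rw [hinv]
    field_simp
    linarith [this]
  have hE : Tendsto (fun t : ℝ => Real.exp (-2 * h ^ 2 * t)) atTop (nhds 0) := by
    have h1 : Tendsto (fun t : ℝ => (2 * h ^ 2) * t) atTop atTop :=
      tendsto_id.const_mul_atTop (by positivity)
    have := Real.tendsto_exp_neg_atTop_nhds_zero.comp h1
    apply this.congr
    intro t
    simp only [Function.comp_apply]
    ring_nf
  have huT : Tendsto u atTop (nhds 0) := by
    have h1 : Tendsto (fun t : ℝ => (x₁ 0 ^ 2 + x₂ 0 ^ 2) * Real.exp (-2 * h ^ 2 * t))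
        atTop (nhds 0) := by
      simpa using hE.const_mul (x₁ 0 ^ 2 + x₂ 0 ^ 2)
    apply h1.congr'
    filter_upwards [eventually_ge_atTop (0:ℝ)] with t ht
    exact (main t ht).symm
  have sq1 : Tendsto (fun t => x₁ t ^ 2) atTop (nhds 0) := by
    apply squeeze_zero' (g := u)
    · filter_upwards with t; positivity
    · filter_upwards with t
      show x₁ t ^ 2 ≤ x₁ t ^ 2 + x₂ t ^ 2
      nlinarith [sq_nonneg (x₂ t)]
    · exact huT
  have sq2 : Tendsto (fun t => x₂ t ^ 2) atTop (nhds 0) := by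
    apply squeeze_zero' (g := u)
    · filter_upwards with t; positivity
    · filter_upwards with t
      show x₂ t ^ 2 ≤ x₁ t ^ 2 + x₂ t ^ 2
      nlinarith [sq_nonneg (x₁ t)]
    · exact huT
  have abs1 : Tendsto (fun t => |x₁ t|) atTop (nhds 0) := by
    have := (Real.continuous_sqrt.tendsto 0).comp sq1
    simp only [Real.sqrt_zero] at this
    apply this.congr
    intro t
    simp [Function.comp_apply, Real.sqrt_sq_eq_abs]
  have abs2 : Tendsto (fun t => |x₂ t|) atTop (nhds 0) := by
    have := (Real.continuous_sqrt.tendsto 0).comp sq2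
    simp only [Real.sqrt_zero] at this
    apply this.congr
    intro t
    simp [Function.comp_apply, Real.sqrt_sq_eq_abs]
  refine ⟨main, (tendsto_zero_iff_abs_tendsto_zero x₁).mpr abs1,
    (tendsto_zero_iff_abs_tendsto_zero x₂).mpr abs2, ?_⟩
  apply tendsto_const_nhds.congr'
  filter_upwards [eventually_ge_atTop (0:ℝ)] with t ht
  exact (h3 t ht).symm
end

section
/- For parameters a, b, c, h, r, ω > 0, the point Z = (0, 0, r/√c) is an equilibrium of the system (f(Z) = 0), the Fréchet derivative of f at Z is the linear map given by the matrix with rows ((r²/c − h², −ω, 0), (ω, r²/c − h², 0), (0, 0, −2r²)), and this matrix, viewed as a complex 3×3 matrix, has exactly the eigenvalues r²/c − h² + iω, r²/c − h² − iω, and −2r². -/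
/-- The point `Z = (0,0,r/√c)` is an equilibrium of the
candidate chaotic system, the Fréchet derivative of `f` at `Z` is given by the
matrix `[[r²/c−h²,−ω,0],[ω,r²/c−h²,0],[0,0,−2r²]]`, and its complex spectrum
is exactly `{r²/c−h²+iω, r²/c−h²−iω, −2r²}`. -/
theorem stmt_13 (a b c h r ω : ℝ)
    (ha : 0 < a) (hb : 0 < b) (hc : 0 < c) (hh : 0 < h) (hr : 0 < r) (hω : 0 < ω)
    (f : (Fin 3 → ℝ) → (Fin 3 → ℝ))
    (hf : ∀ x : Fin 3 → ℝ, f x =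
      ![(x 2 ^ 2 - h ^ 2) * x 0 - ω * x 1,
        ω * x 0 + (x 2 ^ 2 - h ^ 2) * x 1,
        (r ^ 2 - a * x 0 ^ 2 - b * x 1 ^ 2 - c * x 2 ^ 2) * x 2]) :
    f ![0, 0, r / Real.sqrt c] = 0 ∧
    HasFDerivAt f
      (LinearMap.toContinuousLinearMap
        (Matrix.toLin'
          (!![r ^ 2 / c - h ^ 2, -ω, 0; ω, r ^ 2 / c - h ^ 2, 0; 0, 0, -2 * r ^ 2] :
            Matrix (Fin 3) (Fin 3) ℝ))) ![0, 0, r / Real.sqrt c] ∧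
    spectrum ℂ
        ((!![r ^ 2 / c - h ^ 2, -ω, 0; ω, r ^ 2 / c - h ^ 2, 0; 0, 0, -2 * r ^ 2] :
          Matrix (Fin 3) (Fin 3) ℝ).map Complex.ofReal) =
      {(r : ℂ) ^ 2 / c - (h : ℂ) ^ 2 + ω * Complex.I,
       (r : ℂ) ^ 2 / c - (h : ℂ) ^ 2 - ω * Complex.I,
       -2 * (r : ℂ) ^ 2} := by
  obtain rfl : f = _ := funext hf
  set s := r / Real.sqrt c with hsdef
  have hs : s ^ 2 = r ^ 2 / c := by rw [hsdef, div_pow, Real.sq_sqrt hc.le]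
  have hcs : c * s ^ 2 = r ^ 2 := by rw [hs, mul_div_cancel₀ _ hc.ne']
  clear_value s
  refine ⟨?_, ?_, ?_⟩
  · funext i
    fin_cases i <;> simp [hcs]
  · apply hasFDerivAt_pi''
    intro i
    have h0 : HasFDerivAt (𝕜 := ℝ) (fun x : Fin 3 → ℝ => x 0) (ContinuousLinearMap.proj 0) ![0,0,s] :=
      hasFDerivAt_apply 0 ![0,0,s]
    have h1 : HasFDerivAt (𝕜 := ℝ) (fun x : Fin 3 → ℝ => x 1) (ContinuousLinearMap.proj 1) ![0,0,s] :=
      hasFDerivAt_apply 1 ![0,0,s]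
    have h2 : HasFDerivAt (𝕜 := ℝ) (fun x : Fin 3 → ℝ => x 2) (ContinuousLinearMap.proj 2) ![0,0,s] :=
      hasFDerivAt_apply 2 ![0,0,s]
    have e0 : (fun x : Fin 3 → ℝ => x 0 ^ 2) = fun x => x 0 * x 0 := by ext x; ring
    have e1 : (fun x : Fin 3 → ℝ => x 1 ^ 2) = fun x => x 1 * x 1 := by ext x; ring
    have e2 : (fun x : Fin 3 → ℝ => x 2 ^ 2) = fun x => x 2 * x 2 := by ext x; ring
    have hsq0 : HasFDerivAt (𝕜 := ℝ) (fun x : Fin 3 → ℝ => x 0 ^ 2)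
        ((![0,0,s] 0) • ContinuousLinearMap.proj 0 + (![0,0,s] 0) • ContinuousLinearMap.proj 0)
        ![0,0,s] := by rw [e0]; exact h0.mul h0
    have hsq1 : HasFDerivAt (𝕜 := ℝ) (fun x : Fin 3 → ℝ => x 1 ^ 2)
        ((![0,0,s] 1) • ContinuousLinearMap.proj 1 + (![0,0,s] 1) • ContinuousLinearMap.proj 1)
        ![0,0,s] := by rw [e1]; exact h1.mul h1
    have hsq2 : HasFDerivAt (𝕜 := ℝ) (fun x : Fin 3 → ℝ => x 2 ^ 2)
        ((![0,0,s] 2) • ContinuousLinearMap.proj 2 + (![0,0,s] 2) • ContinuousLinearMap.proj 2)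
        ![0,0,s] := by rw [e2]; exact h2.mul h2
    fin_cases i
    · simp only [Matrix.cons_val_zero]
      exact (((hsq2.sub_const (h^2)).mul h0).sub (h1.const_mul ω)).congr_fderiv (by
        ext v
        simp [Matrix.toLin'_apply, Matrix.mulVec, dotProduct, Fin.sum_univ_three, hs]
        try ring)
    · simp only [Matrix.cons_val_one, Matrix.head_cons]
      exact ((h0.const_mul ω).add ((hsq2.sub_const (h^2)).mul h1)).congr_fderiv (by
        ext v
        simp [Matrix.toLin'_apply, Matrix.mulVec, dotProduct, Fin.sum_univ_three, hs]
        try ring)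
    · simp only [Matrix.cons_val_two, Matrix.tail_cons, Matrix.head_cons]
      exact (((((hasFDerivAt_const (r^2) _).sub (hsq0.const_mul a)).sub
          (hsq1.const_mul b)).sub (hsq2.const_mul c)).mul h2).congr_fderiv (by
        ext v
        simp [Matrix.toLin'_apply, Matrix.mulVec, dotProduct, Fin.sum_univ_three, hs, hcs]
        ring_nf
        linear_combination (-(r ^ 2 * v 2)) * mul_inv_cancel₀ hc.ne' + (-2 * v 2) * hcs)
  · ext μ
    rw [spectrum.mem_iff]
    rw [Matrix.isUnit_iff_isUnit_det, isUnit_iff_ne_zero, ne_eq, not_not]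
    have hdet : ((algebraMap ℂ (Matrix (Fin 3) (Fin 3) ℂ)) μ -
        (!![r ^ 2 / c - h ^ 2, -ω, 0; ω, r ^ 2 / c - h ^ 2, 0; 0, 0, -2 * r ^ 2] :
          Matrix (Fin 3) (Fin 3) ℝ).map Complex.ofReal).det =
        (μ - ((r : ℂ) ^ 2 / c - (h : ℂ) ^ 2 + ω * Complex.I)) *
        ((μ - ((r : ℂ) ^ 2 / c - (h : ℂ) ^ 2 - ω * Complex.I)) *
        (μ - (-2 * (r : ℂ) ^ 2))) := by
      simp [Matrix.det_fin_three, Matrix.algebraMap_eq_diagonal, Matrix.diagonal, Matrix.map_apply]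
      push_cast
      ring_nf
      simp [Complex.I_sq]
    rw [hdet]
    simp only [Set.mem_insert_iff, Set.mem_singleton_iff, mul_eq_zero, sub_eq_zero]
end

section
/- For parameters a, b, c, h, r, ω > 0, set T = 2π/ω and let x : [0, T] → ℝ³ be a solution of the system x'(t) = f(x(t)) with x₂(0) = 0, x₁(0) > 0, and x₃(0) > 0. Then x₂(T) = 0, x₁(T) > 0, and x₃(T) > 0. (This expresses that the Poincaré time-T return map P maps the half-plane Σ = {(x₁, 0, x₃) : x₁ > 0, x₃ > 0} into itself.) -/
open Set

/-- Derivative within `Ici t` from derivative within `Icc 0 T`, for `t ∈ Ico 0 T`. -/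
lemma deriv_right_of_Icc {T : ℝ} {w : ℝ → ℝ} {d t : ℝ}
    (hd : HasDerivWithinAt w d (Icc 0 T) t) (ht : t ∈ Ico 0 T) :
    HasDerivWithinAt w d (Ici t) t := by
  apply hd.mono_of_mem_nhdsWithin
  have : Ici t ∩ Iio T ⊆ Icc 0 T := fun s hs => ⟨le_trans ht.1 hs.1, le_of_lt hs.2⟩
  exact mem_nhdsWithin.2 ⟨Iio T, isOpen_Iio, ht.2, by rwa [inter_comm]⟩

/-- Derivative within `Iic t` from derivative within `Icc 0 T`, for `t ∈ Ioc 0 b`, `b ≤ T`. -/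
lemma deriv_left_of_Icc {T b : ℝ} {w : ℝ → ℝ} {d t : ℝ} (hb : b ≤ T)
    (hd : HasDerivWithinAt w d (Icc 0 T) t) (ht : t ∈ Ioc 0 b) :
    HasDerivWithinAt w d (Iic t) t := by
  apply hd.mono_of_mem_nhdsWithin
  have : Iic t ∩ Ioi 0 ⊆ Icc 0 T := fun s hs => ⟨le_of_lt hs.2, le_trans hs.1 (le_trans ht.2 hb)⟩
  exact mem_nhdsWithin.2 ⟨Ioi 0, isOpen_Ioi, ht.1, by rwa [inter_comm]⟩

/-- Linear ODE `w' = g w` on `[0,T]`: zero initial value stays zero; positive initial value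
stays positive. -/
lemma linODE {T : ℝ} (hT : 0 < T) (g w : ℝ → ℝ)
    (hg : ContinuousOn g (Icc 0 T))
    (hw : ∀ t ∈ Icc (0:ℝ) T, HasDerivWithinAt w (g t * w t) (Icc 0 T) t) :
    (w 0 = 0 → w T = 0) ∧ (0 < w 0 → 0 < w T) := by
  -- bound for g on the compact interval
  obtain ⟨C, hC⟩ := (isCompact_Icc (a := (0:ℝ)) (b := T)).exists_bound_of_continuousOn hg
  have hC0 : 0 ≤ C := le_trans (norm_nonneg _) (hC 0 ⟨le_refl 0, le_of_lt hT⟩)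
  -- clamped version of g, globally bounded by C
  set gb : ℝ → ℝ := fun t => max (-C) (min C (g t)) with hgb
  have hgbeq : ∀ t ∈ Icc (0:ℝ) T, gb t = g t := by
    intro t ht
    have := hC t ht
    rw [Real.norm_eq_abs, abs_le] at this
    simp only [hgb, min_eq_right this.2, max_eq_right this.1]
  have hgbbd : ∀ t, |gb t| ≤ C := by
    intro t
    rw [abs_le]
    constructor
    · exact le_max_left _ _
    · exact max_le (le_trans (neg_nonpos_of_nonneg hC0) hC0) (min_le_left _ _)
  set v : ℝ → ℝ → ℝ := fun t y => gb t * y with hv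
  have hlip : ∀ t, LipschitzOnWith C.toNNReal (v t) univ := by
    intro t
    apply LipschitzOnWith.mono (LipschitzWith.lipschitzOnWith ?_) (subset_univ _)
    apply LipschitzWith.of_dist_le_mul
    intro y z
    simp only [hv, Real.dist_eq, ← mul_sub, abs_mul, Real.coe_toNNReal _ hC0]
    exact mul_le_mul_of_nonneg_right (hgbbd t) (abs_nonneg _)
  have hwc : ContinuousOn w (Icc 0 T) := fun t ht => (hw t ht).continuousWithinAt
  have hw' : ∀ t ∈ Ico (0:ℝ) T, HasDerivWithinAt w (v t (w t)) (Ici t) t := by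
    intro t ht
    have := deriv_right_of_Icc (hw t ⟨ht.1, le_of_lt ht.2⟩) ht
    simp only [hv]
    rwa [hgbeq t ⟨ht.1, le_of_lt ht.2⟩]
  constructor
  · intro h0
    have := ODE_solution_unique_of_mem_Icc_right (fun t _ => hlip t) hwc hw' (fun t _ => mem_univ _)
      continuousOn_const (fun t _ => by simpa [hv] using hasDerivWithinAt_const t (Ici t) (0:ℝ))
      (fun t _ => mem_univ _) h0
    exact this ⟨le_of_lt hT, le_refl T⟩
  · intro h0
    by_contra hTle
    push_neg at hTle
    -- IVT: some t₀ with w t₀ = 0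
    have h0mem : (0:ℝ) ∈ Icc (w T) (w 0) := ⟨hTle, le_of_lt h0⟩
    obtain ⟨t₀, ht₀, hwt₀⟩ := intermediate_value_Icc' (le_of_lt hT) hwc h0mem
    have ht₀pos : 0 < t₀ := by
      rcases eq_or_lt_of_le ht₀.1 with he | hl
      · exfalso; rw [← he] at hwt₀; rw [hwt₀] at h0; exact lt_irrefl 0 h0
      · exact hl
    have hw'' : ∀ t ∈ Ioc (0:ℝ) t₀, HasDerivWithinAt w (v t (w t)) (Iic t) t := by
      intro t ht
      have htIcc : t ∈ Icc (0:ℝ) T := ⟨le_of_lt ht.1, le_trans ht.2 ht₀.2⟩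
      have := deriv_left_of_Icc ht₀.2 (hw t htIcc) ht
      simp only [hv]
      rwa [hgbeq t htIcc]
    have := ODE_solution_unique_of_mem_Icc_left (fun t _ => hlip t)
      (hwc.mono (Icc_subset_Icc_right ht₀.2)) hw'' (fun t _ => mem_univ _)
      continuousOn_const (fun t _ => by simpa [hv] using hasDerivWithinAt_const t (Iic t) (0:ℝ))
      (fun t _ => mem_univ _) hwt₀
    have hzero : w 0 = 0 := this ⟨le_refl 0, le_of_lt ht₀pos⟩
    rw [hzero] at h0
    exact lt_irrefl 0 h0

/-- With `T = 2π/ω`, a solution of the candidate chaotic system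
on `[0,T]` starting on the half-plane `Σ = {(x₁,0,x₃) : x₁ > 0, x₃ > 0}`
returns to `Σ` at time `T`: the Poincaré return map maps `Σ` into itself. -/
theorem stmt_15 (a b c h r ω : ℝ)
    (ha : 0 < a) (hb : 0 < b) (hc : 0 < c) (hh : 0 < h) (hr : 0 < r) (hω : 0 < ω)
    (T : ℝ) (hT : T = 2 * Real.pi / ω)
    (x₁ x₂ x₃ : ℝ → ℝ)
    (hx₁ : ∀ t ∈ Set.Icc (0:ℝ) T, HasDerivWithinAt x₁
      ((x₃ t ^ 2 - h ^ 2) * x₁ t - ω * x₂ t) (Set.Icc 0 T) t)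
    (hx₂ : ∀ t ∈ Set.Icc (0:ℝ) T, HasDerivWithinAt x₂
      (ω * x₁ t + (x₃ t ^ 2 - h ^ 2) * x₂ t) (Set.Icc 0 T) t)
    (hx₃ : ∀ t ∈ Set.Icc (0:ℝ) T, HasDerivWithinAt x₃
      ((r ^ 2 - a * x₁ t ^ 2 - b * x₂ t ^ 2 - c * x₃ t ^ 2) * x₃ t)
      (Set.Icc 0 T) t)
    (h02 : x₂ 0 = 0) (h01 : 0 < x₁ 0) (h03 : 0 < x₃ 0) :
    x₂ T = 0 ∧ 0 < x₁ T ∧ 0 < x₃ T := by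
  have hTpos : 0 < T := by
    rw [hT]
    positivity
  have hωT : ω * T = 2 * Real.pi := by
    rw [hT]
    field_simp
  have hcT : Real.cos (ω * T) = 1 := by rw [hωT, Real.cos_two_pi]
  have hsT : Real.sin (ω * T) = 0 := by rw [hωT, Real.sin_two_pi]
  -- continuity of coordinates
  have hx₁c : ContinuousOn x₁ (Icc 0 T) := fun t ht => (hx₁ t ht).continuousWithinAt
  have hx₂c : ContinuousOn x₂ (Icc 0 T) := fun t ht => (hx₂ t ht).continuousWithinAt
  have hx₃c : ContinuousOn x₃ (Icc 0 T) := fun t ht => (hx₃ t ht).continuousWithinAt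
  set g : ℝ → ℝ := fun t => x₃ t ^ 2 - h ^ 2 with hgdef
  have hgc : ContinuousOn g (Icc 0 T) := by
    apply ContinuousOn.sub (hx₃c.pow 2) continuousOn_const
  -- auxiliary derivative facts for cos (ω t), sin (ω t)
  have hcos : ∀ t : ℝ, HasDerivAt (fun s => Real.cos (ω * s)) (-Real.sin (ω * t) * (ω * 1)) t :=
    fun t => ((hasDerivAt_id t).const_mul ω).cos
  have hsin : ∀ t : ℝ, HasDerivAt (fun s => Real.sin (ω * s)) (Real.cos (ω * t) * (ω * 1)) t :=
    fun t => ((hasDerivAt_id t).const_mul ω).sin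
  -- u and w satisfy u' = g u, w' = g w
  set u : ℝ → ℝ := fun t => x₁ t * Real.cos (ω * t) + x₂ t * Real.sin (ω * t) with hudef
  set w : ℝ → ℝ := fun t => x₂ t * Real.cos (ω * t) - x₁ t * Real.sin (ω * t) with hwdef
  have hu : ∀ t ∈ Icc (0:ℝ) T, HasDerivWithinAt u (g t * u t) (Icc 0 T) t := by
    intro t ht
    have := ((hx₁ t ht).mul (hcos t).hasDerivWithinAt).add
      ((hx₂ t ht).mul (hsin t).hasDerivWithinAt)
    refine this.congr_deriv ?_
    simp only [hudef, hgdef]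
    ring
  have hw : ∀ t ∈ Icc (0:ℝ) T, HasDerivWithinAt w (g t * w t) (Icc 0 T) t := by
    intro t ht
    have := ((hx₂ t ht).mul (hcos t).hasDerivWithinAt).sub
      ((hx₁ t ht).mul (hsin t).hasDerivWithinAt)
    refine this.congr_deriv ?_
    simp only [hwdef, hgdef]
    ring
  have hu0 : u 0 = x₁ 0 := by simp [hudef]
  have hw0 : w 0 = 0 := by simp [hwdef, h02]
  have huT : u T = x₁ T := by simp [hudef, hcT, hsT]
  have hwT : w T = x₂ T := by simp [hwdef, hcT, hsT]
  have hUres := linODE hTpos g u hgc hu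
  have hWres := linODE hTpos g w hgc hw
  -- x₃ part
  set g₃ : ℝ → ℝ := fun t => r ^ 2 - a * x₁ t ^ 2 - b * x₂ t ^ 2 - c * x₃ t ^ 2 with hg₃def
  have hg₃c : ContinuousOn g₃ (Icc 0 T) := by
    apply ContinuousOn.sub
    apply ContinuousOn.sub
    apply ContinuousOn.sub continuousOn_const ((hx₁c.pow 2).const_smul a)
    exact (hx₂c.pow 2).const_smul b
    exact (hx₃c.pow 2).const_smul c
  have hx₃' : ∀ t ∈ Icc (0:ℝ) T, HasDerivWithinAt x₃ (g₃ t * x₃ t) (Icc 0 T) t := hx₃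
  have h3res := linODE hTpos g₃ x₃ hg₃c hx₃'
  refine ⟨?_, ?_, ?_⟩
  · rw [← hwT]; exact hWres.1 hw0
  · rw [← huT]; exact hUres.2 (by rw [hu0]; exact h01)
  · exact h3res.2 h03
end

section
/- For parameters a, b, c, h, r, ω > 0 and a feedback gain K > 1, consider the closed-loop system obtained from applying the control u = −Kr²x₃: x₁' = (x₃²−h²)x₁ − ωx₂, x₂' = ωx₁ + (x₃²−h²)x₂, x₃' = ((1−K)r² − ax₁² − bx₂² − cx₃²)x₃. Then every solution x : [0, ∞) → ℝ³ of the closed-loop system satisfies x₃(t)² ≤ x₃(0)²·exp(−2(K−1)r²·t) for all t ≥ 0. -/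
/-- For the closed-loop system obtained with the feedback
`u = −Kr²x₃` (`K > 1`), every solution on `[0,∞)` satisfies
`x₃(t)² ≤ x₃(0)²·exp(−2(K−1)r²t)` for all `t ≥ 0`. -/
theorem stmt_16 (a b c h r ω K : ℝ)
    (ha : 0 < a) (hb : 0 < b) (hc : 0 < c) (hh : 0 < h) (hr : 0 < r) (hω : 0 < ω)
    (hK : 1 < K)
    (x₁ x₂ x₃ : ℝ → ℝ)
    (hx₁ : ∀ t : ℝ, 0 ≤ t → HasDerivAt x₁ ((x₃ t ^ 2 - h ^ 2) * x₁ t - ω * x₂ t) t)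
    (hx₂ : ∀ t : ℝ, 0 ≤ t → HasDerivAt x₂ (ω * x₁ t + (x₃ t ^ 2 - h ^ 2) * x₂ t) t)
    (hx₃ : ∀ t : ℝ, 0 ≤ t → HasDerivAt x₃
      (((1 - K) * r ^ 2 - a * x₁ t ^ 2 - b * x₂ t ^ 2 - c * x₃ t ^ 2) * x₃ t) t) :
    ∀ t : ℝ, 0 ≤ t →
      x₃ t ^ 2 ≤ x₃ 0 ^ 2 * Real.exp (-2 * (K - 1) * r ^ 2 * t) := by
  set α : ℝ := 2 * (K - 1) * r ^ 2 with hα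
  set g : ℝ → ℝ := fun t => x₃ t ^ 2 * Real.exp (α * t) with hg
  have hgd : ∀ t : ℝ, 0 ≤ t → HasDerivAt g
      ((2 * (((1 - K) * r ^ 2 - a * x₁ t ^ 2 - b * x₂ t ^ 2 - c * x₃ t ^ 2) * x₃ t) * x₃ t)
        * Real.exp (α * t) + x₃ t ^ 2 * (α * Real.exp (α * t))) t := by
    intro t ht
    have h1 : HasDerivAt (fun t => x₃ t ^ 2)
        (2 * (((1 - K) * r ^ 2 - a * x₁ t ^ 2 - b * x₂ t ^ 2 - c * x₃ t ^ 2) * x₃ t) * x₃ t) t := by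
      have := ((hx₃ t ht).fun_pow 2)
      simpa [pow_one, mul_comm, mul_assoc, mul_left_comm] using this
    have h2 : HasDerivAt (fun t => Real.exp (α * t)) (α * Real.exp (α * t)) t := by
      have := ((hasDerivAt_id t).const_mul α).exp
      simpa [mul_comm] using this
    simpa using h1.fun_mul h2
  have hcont : ContinuousOn g (Set.Ici 0) := fun t ht =>
    ((hgd t ht).continuousAt).continuousWithinAt
  have hanti : AntitoneOn g (Set.Ici 0) := by
    apply antitoneOn_of_deriv_nonpos (convex_Ici 0) hcont
    · intro t ht
      rw [interior_Ici] at ht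
      exact ((hgd t (le_of_lt ht)).differentiableAt).differentiableWithinAt
    · intro t ht
      rw [interior_Ici] at ht
      rw [(hgd t ht.le).deriv]
      have key : (2 * (((1 - K) * r ^ 2 - a * x₁ t ^ 2 - b * x₂ t ^ 2 - c * x₃ t ^ 2) * x₃ t) * x₃ t)
          + x₃ t ^ 2 * α = -2 * (a * x₁ t ^ 2 + b * x₂ t ^ 2 + c * x₃ t ^ 2) * x₃ t ^ 2 := by
        rw [hα]; ring
      have : ((2 * (((1 - K) * r ^ 2 - a * x₁ t ^ 2 - b * x₂ t ^ 2 - c * x₃ t ^ 2) * x₃ t) * x₃ t)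
          * Real.exp (α * t) + x₃ t ^ 2 * (α * Real.exp (α * t)))
          = (-2 * (a * x₁ t ^ 2 + b * x₂ t ^ 2 + c * x₃ t ^ 2) * x₃ t ^ 2) * Real.exp (α * t) := by
        rw [← key]; ring
      rw [this]
      apply mul_nonpos_of_nonpos_of_nonneg _ (Real.exp_nonneg _)
      have h1 : 0 ≤ a * x₁ t ^ 2 + b * x₂ t ^ 2 + c * x₃ t ^ 2 := by positivity
      nlinarith [sq_nonneg (x₃ t)]
  intro t ht
  have := hanti (Set.self_mem_Ici) ht ht
  have hgt : x₃ t ^ 2 * Real.exp (α * t) ≤ x₃ 0 ^ 2 := by simpa [hg] using this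
  have hepos : (0:ℝ) < Real.exp (α * t) := Real.exp_pos _
  have : x₃ t ^ 2 ≤ x₃ 0 ^ 2 * (Real.exp (α * t))⁻¹ := by
    rw [← le_div_iff₀ hepos] at hgt
    rwa [div_eq_mul_inv] at hgt
  calc x₃ t ^ 2 ≤ x₃ 0 ^ 2 * (Real.exp (α * t))⁻¹ := this
    _ = x₃ 0 ^ 2 * Real.exp (-2 * (K - 1) * r ^ 2 * t) := by
        rw [← Real.exp_neg, hα]; ring_nf
end

section
/- For parameters a, b, c, h, r, ω > 0 and a feedback gain K > 1, consider the closed-loop system obtained from applying the control u = −Kr²x₃: x₁' = (x₃²−h²)x₁ − ωx₂, x₂' = ωx₁ + (x₃²−h²)x₂, x₃' = ((1−K)r² − ax₁² − bx₂² − cx₃²)x₃. Then every solution x : [0, ∞) → ℝ³ of the closed-loop system converges to the origin: x(t) → (0,0,0) as t → ∞. -/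
open Filter Real

/-- Exponential decay: nonnegative `f` with `f' ≤ -λ f` on `[T, ∞)` tends to `0`. -/
lemma decay_aux {f f' : ℝ → ℝ} {T lam : ℝ} (hlam : 0 < lam)
    (hf : ∀ t, T ≤ t → HasDerivAt f (f' t) t)
    (hnn : ∀ t, 0 ≤ f t)
    (hbd : ∀ t, T ≤ t → f' t ≤ -lam * f t) :
    Tendsto f atTop (nhds 0) := by
  set g : ℝ → ℝ := fun t => f t * Real.exp (lam * t) with hg
  have hg' : ∀ t, T ≤ t → HasDerivAt g ((f' t + lam * f t) * Real.exp (lam * t)) t := by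
    intro t ht
    have hexp : HasDerivAt (fun t => Real.exp (lam * t)) (Real.exp (lam * t) * lam) t := by
      simpa [Function.comp_def] using (Real.hasDerivAt_exp (lam * t)).comp t ((hasDerivAt_id t).const_mul lam)
    have := (hf t ht).mul hexp
    refine this.congr_deriv ?_
    ring
  have hanti : AntitoneOn g (Set.Ici T) := by
    apply antitoneOn_of_deriv_nonpos (convex_Ici T)
    · intro t ht
      exact ((hg' t ht).continuousAt).continuousWithinAt
    · intro t ht
      rw [interior_Ici] at ht
      exact ((hg' t (le_of_lt ht)).differentiableAt).differentiableWithinAt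
    · intro t ht
      rw [interior_Ici] at ht
      rw [(hg' t (le_of_lt ht)).deriv]
      have h1 : f' t + lam * f t ≤ 0 := by
        have := hbd t (le_of_lt ht); linarith
      exact mul_nonpos_of_nonpos_of_nonneg h1 (Real.exp_nonneg _)
  have hbound : ∀ t, T ≤ t → f t ≤ g T * Real.exp (-(lam * t)) := by
    intro t ht
    have hgt : g t ≤ g T := hanti Set.self_mem_Ici (Set.mem_Ici.mpr ht) ht
    have hpos : 0 < Real.exp (lam * t) := Real.exp_pos _
    rw [Real.exp_neg]
    have : f t = g t * (Real.exp (lam * t))⁻¹ := by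
      rw [hg]
      field_simp
    rw [this]
    exact mul_le_mul_of_nonneg_right hgt (by positivity)
  have hB : Tendsto (fun t => g T * Real.exp (-(lam * t))) atTop (nhds 0) := by
    have h1 : Tendsto (fun t : ℝ => lam * t) atTop atTop :=
      Tendsto.const_mul_atTop hlam tendsto_id
    have h2 : Tendsto (fun t : ℝ => Real.exp (-(lam * t))) atTop (nhds 0) :=
      Real.tendsto_exp_neg_atTop_nhds_zero.comp h1
    simpa using h2.const_mul (g T)
  refine tendsto_of_tendsto_of_tendsto_of_le_of_le' tendsto_const_nhds hB ?_ ?_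
  · exact Eventually.of_forall (fun t => hnn t)
  · exact eventually_atTop.2 ⟨T, hbound⟩

/-- If `f ^ 2 → 0` then `f → 0`. -/
lemma sq_tendsto {f : ℝ → ℝ} (hf : Tendsto (fun t => f t ^ 2) atTop (nhds 0)) :
    Tendsto f atTop (nhds 0) := by
  have h1 : Tendsto (fun t => Real.sqrt (f t ^ 2)) atTop (nhds 0) := by
    have := (Real.continuous_sqrt.tendsto 0).comp hf
    simpa [Function.comp_def] using this
  have h2 : Tendsto (fun t => |f t|) atTop (nhds 0) := by
    simpa [Real.sqrt_sq_eq_abs] using h1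
  refine tendsto_of_tendsto_of_tendsto_of_le_of_le (g := fun t => -|f t|)
    (h := fun t => |f t|) ?_ h2 (fun t => neg_abs_le _) (fun t => le_abs_self _)
  simpa using h2.neg

/-- For the closed-loop system obtained with the feedback
`u = −Kr²x₃` (`K > 1`), every solution on `[0,∞)` converges to the origin. -/
theorem stmt_17 (a b c h r ω K : ℝ)
    (ha : 0 < a) (hb : 0 < b) (hc : 0 < c) (hh : 0 < h) (hr : 0 < r) (hω : 0 < ω)
    (hK : 1 < K)
    (x₁ x₂ x₃ : ℝ → ℝ)
    (hx₁ : ∀ t : ℝ, 0 ≤ t → HasDerivAt x₁ ((x₃ t ^ 2 - h ^ 2) * x₁ t - ω * x₂ t) t)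
    (hx₂ : ∀ t : ℝ, 0 ≤ t → HasDerivAt x₂ (ω * x₁ t + (x₃ t ^ 2 - h ^ 2) * x₂ t) t)
    (hx₃ : ∀ t : ℝ, 0 ≤ t → HasDerivAt x₃
      (((1 - K) * r ^ 2 - a * x₁ t ^ 2 - b * x₂ t ^ 2 - c * x₃ t ^ 2) * x₃ t) t) :
    Filter.Tendsto x₁ Filter.atTop (nhds 0) ∧
    Filter.Tendsto x₂ Filter.atTop (nhds 0) ∧
    Filter.Tendsto x₃ Filter.atTop (nhds 0) := by
  -- W = x₃², W' ≤ -(2(K-1)r²) W on [0,∞)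
  have hW : Tendsto (fun t => x₃ t ^ 2) atTop (nhds 0) := by
    apply decay_aux (f' := fun t => 2 * x₃ t *
        (((1 - K) * r ^ 2 - a * x₁ t ^ 2 - b * x₂ t ^ 2 - c * x₃ t ^ 2) * x₃ t))
        (T := 0) (lam := 2 * (K - 1) * r ^ 2)
    · have hK1 : 0 < K - 1 := sub_pos.mpr hK
      positivity
    · intro t ht
      have := (hx₃ t ht).pow 2
      refine this.congr_deriv ?_
      ring
    · intro t; positivity
    · intro t ht
      nlinarith [sq_nonneg (x₁ t * x₃ t), sq_nonneg (x₂ t * x₃ t), sq_nonneg (x₃ t * x₃ t),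
        mul_pos (mul_pos two_pos (sub_pos.mpr hK)) (pow_pos hr 2)]
  have hx3 : Tendsto x₃ atTop (nhds 0) := sq_tendsto hW
  -- pick T ≥ 0 with x₃ t ^ 2 ≤ h²/2 for t ≥ T
  have hev : ∀ᶠ t in atTop, x₃ t ^ 2 < h ^ 2 / 2 :=
    hW.eventually_lt_const (by positivity)
  obtain ⟨T₀, hT₀⟩ := eventually_atTop.1 hev
  set T := max T₀ 0 with hTdef
  have hT0 : (0:ℝ) ≤ T := le_max_right _ _
  -- V = x₁² + x₂², V' ≤ -h² V on [T,∞)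
  have hV : Tendsto (fun t => x₁ t ^ 2 + x₂ t ^ 2) atTop (nhds 0) := by
    apply decay_aux (f' := fun t =>
        2 * x₁ t * ((x₃ t ^ 2 - h ^ 2) * x₁ t - ω * x₂ t) +
        2 * x₂ t * (ω * x₁ t + (x₃ t ^ 2 - h ^ 2) * x₂ t))
        (T := T) (lam := h ^ 2)
    · positivity
    · intro t ht
      have h0t : (0:ℝ) ≤ t := le_trans hT0 ht
      have := ((hx₁ t h0t).pow 2).add ((hx₂ t h0t).pow 2)
      refine this.congr_deriv ?_
      ring
    · intro t; positivity
    · intro t ht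
      have h3 : x₃ t ^ 2 < h ^ 2 / 2 := hT₀ t (le_trans (le_max_left _ _) ht)
      nlinarith [sq_nonneg (x₁ t), sq_nonneg (x₂ t)]
  have hx1 : Tendsto x₁ atTop (nhds 0) := by
    apply sq_tendsto
    refine tendsto_of_tendsto_of_tendsto_of_le_of_le tendsto_const_nhds hV ?_ ?_
    · intro t; positivity
    · intro t; exact le_add_of_nonneg_right (sq_nonneg _)
  have hx2 : Tendsto x₂ atTop (nhds 0) := by
    apply sq_tendsto
    refine tendsto_of_tendsto_of_tendsto_of_le_of_le tendsto_const_nhds hV ?_ ?_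
    · intro t; positivity
    · intro t; exact le_add_of_nonneg_left (sq_nonneg _)
  exact ⟨hx1, hx2, hx3⟩
end

section
/- Let a, b, c, r > 0 and let x₁, x₂, x_{s3}, x_{m3} : [0, ∞) → ℝ be differentiable functions satisfying x_{s3}'(t) = (r² − a·x₁(t)² − b·x₂(t)² − c·x_{s3}(t)²)·x_{s3}(t) − r²·(x_{s3}(t) − x_{m3}(t)) and x_{m3}'(t) = (r² − a·x₁(t)² − b·x₂(t)² − c·x_{m3}(t)²)·x_{m3}(t) for all t ≥ 0. Then the error e₃ = x_{s3} − x_{m3} satisfies e₃'(t) = −(a·x₁(t)² + b·x₂(t)² + c·(x_{s3}(t)² + x_{s3}(t)·x_{m3}(t) + x_{m3}(t)²))·e₃(t), where the coefficient a·x₁² + b·x₂² + c·(x_{s3}² + x_{s3}x_{m3} + x_{m3}²) is nonnegative; consequently t ↦ e₃(t)² is nonincreasing on [0, ∞). -/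
/-- With the synchronizing controller `u₃ = −r²e₃`, the
remaining error `e₃ = x_{s3} − x_{m3}` satisfies the pseudo-linear equation
`e₃' = −(ax₁² + bx₂² + c(x_{s3}² + x_{s3}x_{m3} + x_{m3}²))·e₃` with
nonnegative coefficient; consequently `t ↦ e₃(t)²` is nonincreasing on
`[0,∞)`. -/
theorem stmt_19 (a b c r : ℝ)
    (ha : 0 < a) (hb : 0 < b) (hc : 0 < c) (hr : 0 < r)
    (x₁ x₂ xs₃ xm₃ : ℝ → ℝ)
    (hxs₃ : ∀ t : ℝ, 0 ≤ t → HasDerivAt xs₃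
      ((r ^ 2 - a * x₁ t ^ 2 - b * x₂ t ^ 2 - c * xs₃ t ^ 2) * xs₃ t -
        r ^ 2 * (xs₃ t - xm₃ t)) t)
    (hxm₃ : ∀ t : ℝ, 0 ≤ t → HasDerivAt xm₃
      ((r ^ 2 - a * x₁ t ^ 2 - b * x₂ t ^ 2 - c * xm₃ t ^ 2) * xm₃ t) t) :
    (∀ t : ℝ, 0 ≤ t →
      HasDerivAt (fun s => xs₃ s - xm₃ s)
        (-(a * x₁ t ^ 2 + b * x₂ t ^ 2 +
            c * (xs₃ t ^ 2 + xs₃ t * xm₃ t + xm₃ t ^ 2)) * (xs₃ t - xm₃ t)) t ∧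
      0 ≤ a * x₁ t ^ 2 + b * x₂ t ^ 2 +
            c * (xs₃ t ^ 2 + xs₃ t * xm₃ t + xm₃ t ^ 2)) ∧
    AntitoneOn (fun t => (xs₃ t - xm₃ t) ^ 2) (Set.Ici (0:ℝ)) := by
  have key : ∀ t : ℝ, 0 ≤ t →
      HasDerivAt (fun s => xs₃ s - xm₃ s)
        (-(a * x₁ t ^ 2 + b * x₂ t ^ 2 +
            c * (xs₃ t ^ 2 + xs₃ t * xm₃ t + xm₃ t ^ 2)) * (xs₃ t - xm₃ t)) t := by
    intro t ht
    have h : HasDerivAt (fun s => xs₃ s - xm₃ s)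
        ((r ^ 2 - a * x₁ t ^ 2 - b * x₂ t ^ 2 - c * xs₃ t ^ 2) * xs₃ t - r ^ 2 * (xs₃ t - xm₃ t) -
          (r ^ 2 - a * x₁ t ^ 2 - b * x₂ t ^ 2 - c * xm₃ t ^ 2) * xm₃ t) t :=
      (hxs₃ t ht).sub (hxm₃ t ht)
    convert h using 1
    ring
  have hnn : ∀ t : ℝ, 0 ≤ a * x₁ t ^ 2 + b * x₂ t ^ 2 +
      c * (xs₃ t ^ 2 + xs₃ t * xm₃ t + xm₃ t ^ 2) := by
    intro t
    nlinarith [sq_nonneg (x₁ t), sq_nonneg (x₂ t), sq_nonneg (xs₃ t + xm₃ t),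
      sq_nonneg (xs₃ t), sq_nonneg (xm₃ t)]
  refine ⟨fun t ht => ⟨key t ht, hnn t⟩, ?_⟩
  have hsq : ∀ t : ℝ, 0 ≤ t → HasDerivAt (fun s => (xs₃ s - xm₃ s) ^ 2)
      (2 * (xs₃ t - xm₃ t) ^ 1 * (-(a * x₁ t ^ 2 + b * x₂ t ^ 2 +
            c * (xs₃ t ^ 2 + xs₃ t * xm₃ t + xm₃ t ^ 2)) * (xs₃ t - xm₃ t))) t := by
    intro t ht
    exact (key t ht).pow 2
  apply antitoneOn_of_deriv_nonpos (convex_Ici 0)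
  · exact fun t ht => ((hsq t ht).continuousAt).continuousWithinAt
  · intro t ht
    rw [interior_Ici] at ht
    exact (hsq t ht.le).differentiableAt.differentiableWithinAt
  · intro t ht
    rw [interior_Ici] at ht
    rw [(hsq t ht.le).deriv]
    have := hnn t
    nlinarith [sq_nonneg (xs₃ t - xm₃ t)]
end
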